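/- arXiv:math/0610968 — 9 statements merged into one kernel-verified Lean document; each statement's English description precedes it below -/
import Mathlib

section
/- Let p be an odd prime, ζ a primitive p-th root of unity, K = ℚ(ζ), O_K = ℤ[ζ], and π = (1-ζ)O_K the prime ideal above p. If α, β ∈ O_K with α ≢ 0 mod π and α ≡ β mod π, then α^p ≡ β^p mod π^(p+1). -/
open scoped NumberField

open Finset in
private lemma aux_binom {R : Type*} [CommRing R] {p : ℕ} (hp : p.Prime) (x y : R) :
    ∃ c : R, (x + y) ^ p = x ^ p + p * x ^ (p - 1) * y + y ^ p + p * y ^ 2 * c := by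
  have h2 : 2 ≤ p := hp.two_le
  have key : ((p : R) * y ^ 2) ∣
      ∑ k ∈ Ico 2 p, y ^ k * x ^ (p - k) * (p.choose k : R) := by
    refine Finset.dvd_sum fun k hk => ?_
    obtain ⟨hk2, hkp⟩ := Finset.mem_Ico.mp hk
    obtain ⟨m, hm⟩ := hp.dvd_choose_self (by omega) hkp
    have hyk : y ^ k = y ^ 2 * y ^ (k - 2) := by rw [← pow_add]; congr 1; omega
    refine ⟨y ^ (k - 2) * x ^ (p - k) * m, ?_⟩
    rw [hyk, hm]; push_cast; ring
  obtain ⟨c, hc⟩ := key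
  refine ⟨c, ?_⟩
  have hb : (x + y) ^ p = ∑ k ∈ range (p + 1), y ^ k * x ^ (p - k) * (p.choose k : R) := by
    rw [add_comm x y]; exact add_pow y x p
  rw [hb, sum_range_succ, range_eq_Ico,
    sum_eq_sum_Ico_succ_bot (by omega : 0 < p),
    sum_eq_sum_Ico_succ_bot (by omega : 1 < p), hc]
  simp only [pow_zero, Nat.sub_zero, Nat.choose_zero_right, Nat.choose_one_right,
    Nat.choose_self, Nat.sub_self, pow_one, Nat.cast_one]
  ring

/-- Let `p` be an odd prime, `ζ` a primitive `p`-th root of unity, `K = ℚ(ζ)`,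
`O_K = ℤ[ζ]`, and `π = (1-ζ)O_K`. If `α, β ∈ O_K` with `α ≢ 0 mod π` and
`α ≡ β mod π`, then `α^p ≡ β^p mod π^(p+1)`. -/
theorem stmt_0 (p : ℕ+) (hp : (p : ℕ).Prime) (hodd : Odd (p : ℕ))
    (K : Type) [Field K] [NumberField K] [IsCyclotomicExtension {(p : ℕ)} ℚ K]
    (ζ : 𝓞 K) (hζ : IsPrimitiveRoot ζ p)
    (α β : 𝓞 K)
    (hα : α ∉ Ideal.span {1 - ζ})
    (hαβ : α - β ∈ Ideal.span {1 - ζ}) :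
    α ^ (p : ℕ) - β ^ (p : ℕ) ∈ (Ideal.span {1 - ζ} : Ideal (𝓞 K)) ^ ((p : ℕ) + 1) := by
  classical
  haveI : Fact (p : ℕ).Prime := ⟨hp⟩
  have hp3 : 3 ≤ (p : ℕ) := by
    obtain ⟨k, hk⟩ := hodd
    have := hp.two_le
    omega
  set δ : 𝓞 K := ζ - 1 with hδdef
  have hδ0 : δ ≠ 0 := sub_ne_zero.mpr (hζ.ne_one (by exact_mod_cast (by omega : 1 < (p : ℕ))))
  have h1ζ : (1 - ζ) = -δ := by rw [hδdef]; ring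
  -- translate hypotheses to divisibility by δ
  rw [Ideal.mem_span_singleton, h1ζ, neg_dvd] at hαβ
  rw [Ideal.mem_span_singleton, h1ζ, neg_dvd] at hα
  rw [Ideal.span_singleton_pow, Ideal.mem_span_singleton, h1ζ,
    (hodd.add_one).neg_pow]
  -- the basic identity
  set S : 𝓞 K := ∑ k ∈ Finset.Ico 2 (p : ℕ), δ ^ k * ((p : ℕ).choose k : 𝓞 K) with hSdef
  have hI : (p : 𝓞 K) * δ + δ ^ (p : ℕ) + S = 0 := by
    have hb : (δ + 1) ^ (p : ℕ)
        = ∑ k ∈ Finset.range ((p : ℕ) + 1), δ ^ k * ((p : ℕ).choose k : 𝓞 K) := by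
      have := add_pow δ (1 : 𝓞 K) (p : ℕ)
      simpa using this
    have hζp : (δ + 1) ^ (p : ℕ) = 1 := by
      rw [hδdef, sub_add_cancel]; exact hζ.pow_eq_one
    rw [hζp, Finset.sum_range_succ, Finset.range_eq_Ico,
      Finset.sum_eq_sum_Ico_succ_bot (by omega : 0 < (p : ℕ)),
      Finset.sum_eq_sum_Ico_succ_bot (by omega : 1 < (p : ℕ))] at hb
    simp only [pow_zero, Nat.choose_zero_right, Nat.choose_one_right, Nat.choose_self,
      pow_one, Nat.cast_one, one_mul, mul_one] at hb
    rw [← hSdef] at hb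
    linear_combination -hb
  have hSdvd : ∀ m : ℕ, δ ^ m ∣ (p : 𝓞 K) → δ ^ (m + 2) ∣ S := by
    intro m hm
    refine Finset.dvd_sum fun k hk => ?_
    obtain ⟨hk2, hkp⟩ := Finset.mem_Ico.mp hk
    obtain ⟨t, ht⟩ := hp.dvd_choose_self (by omega : k ≠ 0) hkp
    have hpc : (p : 𝓞 K) ∣ ((p : ℕ).choose k : 𝓞 K) := ⟨(t : 𝓞 K), by exact_mod_cast ht⟩
    obtain ⟨d, hd⟩ := hm
    obtain ⟨c, hc⟩ := hpc
    refine ⟨δ ^ (k - 2) * d * c, ?_⟩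
    have hδk : δ ^ k = δ ^ 2 * δ ^ (k - 2) := by rw [← pow_add]; congr 1; omega
    rw [hδk, hc, hd, pow_add]
    ring
  have hP1 : ∀ m : ℕ, m ≤ (p : ℕ) - 1 → δ ^ m ∣ (p : 𝓞 K) := by
    intro m
    induction m with
    | zero => intro _; simpa using dvd_refl (1 : 𝓞 K)
    | succ n ih =>
      intro h
      have hn := ih (by omega)
      have h2 : δ ^ (n + 2) ∣ S := hSdvd n hn
      have h3 : δ ^ (n + 2) ∣ δ ^ (p : ℕ) := pow_dvd_pow δ (by omega)
      have h4 : δ ^ (n + 2) ∣ (p : 𝓞 K) * δ := by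
        have he : (p : 𝓞 K) * δ = -(S + δ ^ (p : ℕ)) := by linear_combination hI
        rw [he]
        exact dvd_neg.mpr (dvd_add h2 h3)
      have h5 : δ * δ ^ (n + 1) ∣ δ * (p : 𝓞 K) := by
        rw [← pow_succ']
        rw [mul_comm] at h4
        exact h4
      exact (mul_dvd_mul_iff_left hδ0).mp h5
  have hδp1 : δ ^ ((p : ℕ) - 1) ∣ (p : 𝓞 K) := hP1 _ le_rfl
  have hδdvdp : δ ∣ (p : 𝓞 K) := by
    have := hP1 1 (by omega)
    simpa using this
  have hP2 : δ ^ (p : ℕ) ∣ (p : 𝓞 K) + δ ^ ((p : ℕ) - 1) := by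
    have hS : δ ^ ((p : ℕ) + 1) ∣ S := by
      have := hSdvd ((p : ℕ) - 1) hδp1
      have he : (p : ℕ) - 1 + 2 = (p : ℕ) + 1 := by omega
      rwa [he] at this
    have hpow : δ * δ ^ ((p : ℕ) - 1) = δ ^ (p : ℕ) := by
      rw [← pow_succ']; congr 1; omega
    have he : δ * ((p : 𝓞 K) + δ ^ ((p : ℕ) - 1)) = -(S + 0) := by
      linear_combination hI + hpow
    have h6 : δ * δ ^ (p : ℕ) ∣ δ * ((p : 𝓞 K) + δ ^ ((p : ℕ) - 1)) := by
      rw [he, ← pow_succ']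
      simpa using (dvd_neg.mpr hS)
    exact (mul_dvd_mul_iff_left hδ0).mp h6
  -- every element is congruent to an integer mod δ
  have hF0 : ∀ x : 𝓞 K, ∃ a : ℤ, δ ∣ x - (a : 𝓞 K) := by
    intro x
    have hζK : IsPrimitiveRoot (algebraMap (𝓞 K) K ζ) p :=
      hζ.map_of_injective (NumberField.RingOfIntegers.coe_injective)
    have hgen : hζK.integralPowerBasis.gen = ζ := by
      rw [IsPrimitiveRoot.integralPowerBasis_gen]
      rfl
    obtain ⟨f, hf⟩ := hζK.integralPowerBasis.exists_eq_aeval' x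
    rw [hgen] at hf
    refine ⟨f.eval 1, ?_⟩
    have h1 : x = (f.map (algebraMap ℤ (𝓞 K))).eval ζ := by
      rw [hf, Polynomial.aeval_def, ← Polynomial.eval_map]
    have h2 : ((f.eval 1 : ℤ) : 𝓞 K) = (f.map (algebraMap ℤ (𝓞 K))).eval 1 := by
      rw [Polynomial.eval_one_map]
      simp
    rw [h1, h2, hδdef]
    exact Polynomial.sub_dvd_eval_sub ζ 1 _
  -- Frobenius: x^p ≡ x mod δ
  have hF1 : ∀ x : 𝓞 K, δ ∣ x ^ (p : ℕ) - x := by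
    intro x
    obtain ⟨a, ha⟩ := hF0 x
    have h1 : δ ∣ x ^ (p : ℕ) - (a : 𝓞 K) ^ (p : ℕ) :=
      ha.trans (sub_dvd_pow_sub_pow x (a : 𝓞 K) (p : ℕ))
    have h2 : (p : ℤ) ∣ a ^ (p : ℕ) - a := by
      have : ((a ^ (p : ℕ) - a : ℤ) : ZMod (p : ℕ)) = 0 := by
        push_cast
        rw [ZMod.pow_card]
        ring
      exact_mod_cast (ZMod.intCast_zmod_eq_zero_iff_dvd _ _).mp this
    have h3 : δ ∣ ((a ^ (p : ℕ) - a : ℤ) : 𝓞 K) := by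
      refine hδdvdp.trans ?_
      have := map_dvd (Int.castRingHom (𝓞 K)) h2
      simpa using this
    have := dvd_add (dvd_add h1 h3) (dvd_neg.mpr ha)
    have he : x ^ (p : ℕ) - (a : 𝓞 K) ^ (p : ℕ) + ((a ^ (p : ℕ) - a : ℤ) : 𝓞 K)
        + -(x - (a : 𝓞 K)) = x ^ (p : ℕ) - x := by push_cast; ring
    rwa [he] at this
  -- set up the main computation
  obtain ⟨γ, hγ⟩ := hαβ
  obtain ⟨a, ha⟩ := hF0 α
  have hpa : ¬ (p : ℤ) ∣ a := by
    intro h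
    apply hα
    have h1 : δ ∣ (a : 𝓞 K) := by
      refine hδdvdp.trans ?_
      have := map_dvd (Int.castRingHom (𝓞 K)) h
      simpa using this
    have := dvd_add ha h1
    simpa using this
  have hfermat : (p : ℤ) ∣ a ^ ((p : ℕ) - 1) - 1 := by
    have ha0 : (a : ZMod (p : ℕ)) ≠ 0 := by
      rw [Ne, ZMod.intCast_zmod_eq_zero_iff_dvd]
      exact_mod_cast hpa
    have : ((a ^ ((p : ℕ) - 1) - 1 : ℤ) : ZMod (p : ℕ)) = 0 := by
      push_cast
      rw [ZMod.pow_card_sub_one_eq_one ha0]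
      ring
    exact_mod_cast (ZMod.intCast_zmod_eq_zero_iff_dvd _ _).mp this
  have hβa : δ ∣ β - (a : 𝓞 K) := by
    have h := dvd_sub ha (⟨γ, hγ⟩ : δ ∣ α - β)
    have he : (α - (a : 𝓞 K)) - (α - β) = β - (a : 𝓞 K) := by ring
    rwa [he] at h
  have hpow : δ * δ ^ ((p : ℕ) - 1) = δ ^ (p : ℕ) := by
    rw [← pow_succ']; congr 1; omega
  have hpow2 : δ ^ ((p : ℕ) - 1) * δ = δ ^ (p : ℕ) := by
    rw [mul_comm]; exact hpow
  have key1 : δ ^ (p : ℕ) ∣ (p : 𝓞 K) * β ^ ((p : ℕ) - 1) + δ ^ ((p : ℕ) - 1) := by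
    have t1 : δ ^ (p : ℕ) ∣ (p : 𝓞 K) * (β ^ ((p : ℕ) - 1) - (a : 𝓞 K) ^ ((p : ℕ) - 1)) := by
      rw [← hpow2]
      exact mul_dvd_mul hδp1 (hβa.trans (sub_dvd_pow_sub_pow β (a : 𝓞 K) ((p : ℕ) - 1)))
    have t2 : δ ^ (p : ℕ) ∣ (p : 𝓞 K) * ((a : 𝓞 K) ^ ((p : ℕ) - 1) - 1) := by
      have hcast : ((a : 𝓞 K) ^ ((p : ℕ) - 1) - 1) = ((a ^ ((p : ℕ) - 1) - 1 : ℤ) : 𝓞 K) := by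
        push_cast; ring
      have hdf : δ ^ ((p : ℕ) - 1) ∣ ((a ^ ((p : ℕ) - 1) - 1 : ℤ) : 𝓞 K) := by
        refine hδp1.trans ?_
        have := map_dvd (Int.castRingHom (𝓞 K)) hfermat
        simpa using this
      have d2 : δ ^ ((p : ℕ) - 1) * δ ^ ((p : ℕ) - 1)
          ∣ (p : 𝓞 K) * ((a : 𝓞 K) ^ ((p : ℕ) - 1) - 1) := by
        rw [hcast]
        exact mul_dvd_mul hδp1 hdf
      refine dvd_trans ?_ d2
      rw [← pow_add]
      exact pow_dvd_pow δ (by omega)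
    have := dvd_add (dvd_add t1 t2) hP2
    have he : (p : 𝓞 K) * (β ^ ((p : ℕ) - 1) - (a : 𝓞 K) ^ ((p : ℕ) - 1))
        + (p : 𝓞 K) * ((a : 𝓞 K) ^ ((p : ℕ) - 1) - 1) + ((p : 𝓞 K) + δ ^ ((p : ℕ) - 1))
        = (p : 𝓞 K) * β ^ ((p : ℕ) - 1) + δ ^ ((p : ℕ) - 1) := by ring
    rwa [he] at this
  have key2 : δ ^ (p : ℕ) ∣
      (p : 𝓞 K) * β ^ ((p : ℕ) - 1) * γ + δ ^ ((p : ℕ) - 1) * (γ ^ (p : ℕ)) := by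
    have t3 : δ ^ (p : ℕ) ∣ δ ^ ((p : ℕ) - 1) * (γ ^ (p : ℕ) - γ) := by
      rw [← hpow2]
      exact mul_dvd_mul dvd_rfl (hF1 γ)
    have t4 : δ ^ (p : ℕ) ∣ ((p : 𝓞 K) * β ^ ((p : ℕ) - 1) + δ ^ ((p : ℕ) - 1)) * γ :=
      key1.mul_right γ
    have := dvd_add t4 t3
    have he : ((p : 𝓞 K) * β ^ ((p : ℕ) - 1) + δ ^ ((p : ℕ) - 1)) * γ
        + δ ^ ((p : ℕ) - 1) * (γ ^ (p : ℕ) - γ)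
        = (p : 𝓞 K) * β ^ ((p : ℕ) - 1) * γ + δ ^ ((p : ℕ) - 1) * (γ ^ (p : ℕ)) := by ring
    rwa [he] at this
  obtain ⟨c, hc⟩ := aux_binom hp β (δ * γ)
  have hαeq : α = β + δ * γ := by linear_combination hγ
  have hfin1 : δ ^ ((p : ℕ) + 1) ∣ (p : 𝓞 K) * (δ * γ) ^ 2 * c := by
    have d1 : δ ^ ((p : ℕ) - 1) * δ ^ 2 ∣ (p : 𝓞 K) * (δ * γ) ^ 2 :=
      mul_dvd_mul hδp1 ⟨γ ^ 2, by ring⟩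
    have he : δ ^ ((p : ℕ) - 1) * δ ^ 2 = δ ^ ((p : ℕ) + 1) := by
      rw [← pow_add]; congr 1; omega
    rw [he] at d1
    exact d1.mul_right c
  have hfin2 : δ ^ ((p : ℕ) + 1) ∣ (p : 𝓞 K) * β ^ ((p : ℕ) - 1) * (δ * γ) + (δ * γ) ^ (p : ℕ) := by
    have d2 : δ * δ ^ (p : ℕ) ∣
        δ * ((p : 𝓞 K) * β ^ ((p : ℕ) - 1) * γ + δ ^ ((p : ℕ) - 1) * (γ ^ (p : ℕ))) :=
      mul_dvd_mul_left δ key2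
    have he : δ * ((p : 𝓞 K) * β ^ ((p : ℕ) - 1) * γ + δ ^ ((p : ℕ) - 1) * (γ ^ (p : ℕ)))
        = (p : 𝓞 K) * β ^ ((p : ℕ) - 1) * (δ * γ) + (δ * γ) ^ (p : ℕ) := by
      rw [mul_pow]
      linear_combination (γ ^ (p : ℕ)) * hpow
    rw [he, ← pow_succ'] at d2
    exact d2
  have hfinal : α ^ (p : ℕ) - β ^ (p : ℕ)
      = ((p : 𝓞 K) * β ^ ((p : ℕ) - 1) * (δ * γ) + (δ * γ) ^ (p : ℕ))
        + (p : 𝓞 K) * (δ * γ) ^ 2 * c := by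
    rw [hαeq, hc]; ring
  rw [hfinal]
  exact dvd_add hfin2 hfin1
end

section
/- Let p be an odd prime, ζ a primitive p-th root of unity, λ = ζ - 1, and π = λO_K the prime ideal above p. If α, β ∈ O_K with α ≢ 0 mod π and α ≡ β mod π, then there exists exactly one k with 0 ≤ k ≤ p-1 such that α - ζ^k β ≡ 0 mod π². -/
open scoped NumberField

set_option maxHeartbeats 1600000
set_option synthInstance.maxHeartbeats 400000

/-- If `α, β ∈ O_K` with `α ≢ 0 mod π` and `α ≡ β mod π`, then there exists exactly one
`k` with `0 ≤ k ≤ p-1` such that `α - ζ^k β ≡ 0 mod π²`. -/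
theorem stmt_1 (p : ℕ+) (hp : (p : ℕ).Prime) (hodd : Odd (p : ℕ))
    (K : Type) [Field K] [NumberField K] [IsCyclotomicExtension {(p : ℕ)} ℚ K]
    (ζ : 𝓞 K) (hζ : IsPrimitiveRoot ζ p)
    (α β : 𝓞 K)
    (hα : α ∉ Ideal.span {1 - ζ})
    (hαβ : α - β ∈ Ideal.span {1 - ζ}) :
    ∃! k : ℕ, k ≤ (p : ℕ) - 1 ∧
      α - ζ ^ k * β ∈ (Ideal.span {1 - ζ} : Ideal (𝓞 K)) ^ 2 := by
  haveI : Fact ((p : ℕ).Prime) := ⟨hp⟩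
  have hinj : Function.Injective (algebraMap (𝓞 K) K) :=
    NumberField.RingOfIntegers.coe_injective
  have hζK : IsPrimitiveRoot (algebraMap (𝓞 K) K ζ) p := hζ.map_of_injective hinj
  have hts : hζK.toInteger = ζ := by ext; rfl
  have hprime : Prime (ζ - 1) := by
    have := hζK.zeta_sub_one_prime'
    rwa [hts] at this
  have hl0 : (ζ - 1) ≠ 0 := hprime.ne_zero
  have hspan : (Ideal.span {1 - ζ} : Ideal (𝓞 K)) = Ideal.span {ζ - 1} := by
    rw [show (1 - ζ : 𝓞 K) = -(ζ - 1) by ring, Ideal.span_singleton_neg]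
  have hpdvd : (ζ - 1) ∣ ((p : ℕ) : 𝓞 K) := by
    have := hζK.toInteger_sub_one_dvd_prime'
    rw [hts] at this
    exact_mod_cast this
  -- membership rewritten to divisibility
  rw [hspan, Ideal.mem_span_singleton] at hα hαβ
  obtain ⟨γ, hγ⟩ := hαβ
  have hβ : ¬ (ζ - 1) ∣ β := by
    intro h
    exact hα (by have := dvd_add ⟨γ, hγ⟩ h; rwa [sub_add_cancel] at this)
  -- every element is congruent to an integer mod (ζ - 1)
  have hsurj : ∀ x : 𝓞 K, ∃ n : ℤ, (ζ - 1) ∣ (x - (n : 𝓞 K)) := by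
    intro x
    have htop : x ∈ Algebra.adjoin ℤ ({ζ} : Set (𝓞 K)) := by
      have h := hζK.integralPowerBasis.adjoin_gen_eq_top
      rw [hζK.integralPowerBasis_gen, hts] at h
      rw [h]; trivial
    refine Algebra.adjoin_induction (fun y hy => ?_) (fun r => ?_)
      (fun y z _ _ hy hz => ?_) (fun y z _ _ hy hz => ?_) htop
    · rcases hy with rfl
      exact ⟨1, by simpa using dvd_refl (ζ - 1)⟩
    · exact ⟨r, by simp⟩
    · obtain ⟨m, hm⟩ := hy; obtain ⟨n, hn⟩ := hz
      refine ⟨m + n, ?_⟩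
      have := dvd_add hm hn
      push_cast
      convert this using 1; ring
    · obtain ⟨m, hm⟩ := hy; obtain ⟨n, hn⟩ := hz
      refine ⟨m * n, ?_⟩
      have := dvd_add (hn.mul_left y) (hm.mul_right (n : 𝓞 K))
      push_cast
      convert this using 1; ring
  -- small naturals divisible by (ζ-1) are zero
  have hnat : ∀ n : ℕ, n < (p : ℕ) → (ζ - 1) ∣ ((n : ℕ) : 𝓞 K) → n = 0 := by
    intro n hn hdvd
    by_contra h0
    have hcop : Nat.Coprime n (p : ℕ) :=
      Nat.Coprime.symm <| (Nat.Prime.coprime_iff_not_dvd hp).mpr fun hd =>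
        absurd (Nat.le_of_dvd (Nat.pos_of_ne_zero h0) hd) (not_le.2 hn)
    obtain ⟨u, v, huv⟩ := Nat.isCoprime_iff_coprime.mpr hcop
    have hcast : (u : 𝓞 K) * (n : ℕ) + (v : 𝓞 K) * ((p : ℕ) : 𝓞 K) = 1 := by
      have := congrArg (fun t : ℤ => (t : 𝓞 K)) huv
      push_cast at this
      exact this
    have hdvd1 : (ζ - 1) ∣ ((u : 𝓞 K) * (n : ℕ) + (v : 𝓞 K) * ((p : ℕ) : 𝓞 K)) :=
      dvd_add (hdvd.mul_left _) (hpdvd.mul_left _)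
    rw [hcast] at hdvd1
    exact hprime.not_unit (isUnit_of_dvd_one hdvd1)
  -- key congruence ζ^k - 1 ≡ k (ζ-1) mod (ζ-1)^2
  have hpow : ∀ k : ℕ, (ζ - 1) ^ 2 ∣ (ζ ^ k - 1 - (k : 𝓞 K) * (ζ - 1)) := by
    intro k
    induction k with
    | zero => simp
    | succ k ih =>
      obtain ⟨e, he⟩ := ih
      refine ⟨ζ * e + (k : 𝓞 K), ?_⟩
      push_cast
      linear_combination ζ * he
  -- condition rewritten
  have hcond : ∀ k : ℕ, (α - ζ ^ k * β ∈ (Ideal.span {1 - ζ} : Ideal (𝓞 K)) ^ 2)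
      ↔ (ζ - 1) ∣ (γ - (k : 𝓞 K) * β) := by
    intro k
    rw [hspan, Ideal.span_singleton_pow, Ideal.mem_span_singleton]
    obtain ⟨e, he⟩ := hpow k
    have heq : α - ζ ^ k * β = (ζ - 1) * (γ - (k : 𝓞 K) * β) + (ζ - 1) ^ 2 * (-(e * β)) := by
      linear_combination hγ - β * he
    constructor
    · intro h
      have h2 : (ζ - 1) ^ 2 ∣ (ζ - 1) * (γ - (k : 𝓞 K) * β) := by
        have := dvd_sub h (Dvd.intro _ rfl : (ζ - 1) ^ 2 ∣ (ζ - 1) ^ 2 * (-(e * β)))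
        rwa [heq, add_sub_cancel_right] at this
      rw [pow_two] at h2
      exact (mul_dvd_mul_iff_left hl0).mp h2
    · intro h
      rw [heq, pow_two]
      exact dvd_add (mul_dvd_mul_left _ h) (Dvd.intro _ rfl)
  -- pass to the residue field
  set π : Ideal (𝓞 K) := Ideal.span {ζ - 1} with hπdef
  have hπprime : π.IsPrime := (Ideal.span_singleton_prime hl0).2 hprime
  have hπbot : π ≠ ⊥ := by
    simp only [hπdef, Ne, Ideal.span_singleton_eq_bot]
    exact hl0
  haveI hmax : π.IsMaximal := Ideal.IsPrime.isMaximal hπprime hπbot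
  set q : 𝓞 K →+* 𝓞 K ⧸ π := Ideal.Quotient.mk π with hqdef
  have hq0 : ∀ x : 𝓞 K, q x = 0 ↔ (ζ - 1) ∣ x := by
    intro x
    rw [hqdef, Ideal.Quotient.eq_zero_iff_mem, hπdef, Ideal.mem_span_singleton]
  have hqp : ((p : ℕ) : 𝓞 K ⧸ π) = 0 := by
    rw [← map_natCast q, hq0]
    exact hpdvd
  -- nat injectivity below p
  have hinjnat : ∀ a b : ℕ, a < (p : ℕ) → b < (p : ℕ) →
      ((a : ℕ) : 𝓞 K ⧸ π) = ((b : ℕ) : 𝓞 K ⧸ π) → a = b := by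
    intro a b ha hb hab
    rcases le_total a b with h | h
    · have hd : ((b - a : ℕ) : 𝓞 K ⧸ π) = 0 := by
        rw [Nat.cast_sub h, hab, sub_self]
      have : (ζ - 1) ∣ ((b - a : ℕ) : 𝓞 K) := by
        rw [← hq0, map_natCast]
        exact hd
      have := hnat _ (lt_of_le_of_lt (Nat.sub_le _ _) hb) this
      omega
    · have hd : ((a - b : ℕ) : 𝓞 K ⧸ π) = 0 := by
        rw [Nat.cast_sub h, hab, sub_self]
      have : (ζ - 1) ∣ ((a - b : ℕ) : 𝓞 K) := by
        rw [← hq0, map_natCast]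
        exact hd
      have := hnat _ (lt_of_le_of_lt (Nat.sub_le _ _) ha) this
      omega
  -- an inverse of β modulo π
  have hβπ : β ∉ π := fun h => hβ (by rwa [hπdef, Ideal.mem_span_singleton] at h)
  obtain ⟨δ, i, hiπ, hδ⟩ := hmax.exists_inv hβπ
  have hδβ : q δ * q β = 1 := by
    have h := congrArg q hδ
    rwa [map_add, map_mul, Ideal.Quotient.eq_zero_iff_mem.mpr hiπ, add_zero, map_one] at h
  -- the integer n representing γ * δ
  obtain ⟨n, hn⟩ := hsurj (γ * δ)
  have hnF : ((n : ℤ) : 𝓞 K ⧸ π) = q (γ * δ) := by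
    have h := (hq0 _).mpr hn
    rw [map_sub, sub_eq_zero, map_intCast] at h
    exact h.symm
  set k : ℕ := (n % (p : ℕ)).toNat with hkdef
  have hppos : (0 : ℤ) < (p : ℕ) := by exact_mod_cast hp.pos
  have hklt : k < (p : ℕ) := by
    have h1 : n % (p : ℕ) < (p : ℕ) := Int.emod_lt_of_pos n hppos
    omega
  have hkn : ((k : ℕ) : ℤ) = n % (p : ℕ) := Int.toNat_of_nonneg (Int.emod_nonneg n (by omega))
  have hkF : ((k : ℕ) : 𝓞 K ⧸ π) = ((n : ℤ) : 𝓞 K ⧸ π) := by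
    have hdiff : n - (k : ℕ) = ((p : ℕ) : ℤ) * (n / (p : ℕ)) := by
      rw [hkn, Int.emod_def]; ring
    have h : ((n - (k : ℕ) : ℤ) : 𝓞 K ⧸ π) = 0 := by
      rw [hdiff]; push_cast; rw [hqp, zero_mul]
    push_cast at h
    exact (sub_eq_zero.mp h).symm
  have hkcond : (ζ - 1) ∣ (γ - (k : 𝓞 K) * β) := by
    rw [← hq0, map_sub, map_mul, map_natCast, hkF, hnF, map_mul, sub_eq_zero,
      mul_assoc, hδβ, mul_one]
  have hcancel : ∀ m : ℕ, q γ = ((m : ℕ) : 𝓞 K ⧸ π) * q β →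
      ((m : ℕ) : 𝓞 K ⧸ π) = q γ * q δ := by
    intro m hm
    rw [hm, mul_assoc, mul_comm (q β) (q δ), hδβ, mul_one]
  have h3 : q γ = ((k : ℕ) : 𝓞 K ⧸ π) * q β := by
    have h := (hq0 _).mpr hkcond
    rwa [map_sub, map_mul, map_natCast, sub_eq_zero] at h
  have hle : ∀ m : ℕ, m ≤ (p : ℕ) - 1 ↔ m < (p : ℕ) := by
    intro m; have := hp.two_le; omega
  refine ⟨k, ⟨(hle k).mpr hklt, (hcond k).mpr hkcond⟩, ?_⟩
  rintro k' ⟨hk'le, hk'mem⟩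
  have hk'lt : k' < (p : ℕ) := (hle k').mp hk'le
  have h2 : q γ = ((k' : ℕ) : 𝓞 K ⧸ π) * q β := by
    have h := (hq0 _).mpr ((hcond k').mp hk'mem)
    rwa [map_sub, map_mul, map_natCast, sub_eq_zero] at h
  exact hinjnat k' k hk'lt hklt (by rw [hcancel k' h2, ← hcancel k h3])
end

section
/- Let p be an odd prime, K = ℚ(ζ) the p-th cyclotomic field with complex conjugation denoted by bar, and π = (1-ζ)O_K. If C ∈ K satisfies C·C̄ = 1 and C ≡ 1 mod π with C ≠ 1, then the π-adic valuation v_π(C - 1) is odd. -/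
open scoped NumberField
open Multiplicative IsDedekindDomain IsDedekindDomain.HeightOneSpectrum

lemma aux_exists_ofAdd (x : WithZero (Multiplicative ℤ)) (h0 : x ≠ 0) :
    ∃ m : ℤ, x = ((Multiplicative.ofAdd m : Multiplicative ℤ) : WithZero (Multiplicative ℤ)) := by
  obtain ⟨y, rfl⟩ := WithZero.ne_zero_iff_exists.mp h0
  exact ⟨Multiplicative.toAdd y, rfl⟩

lemma aux_coe_mul (a b : ℤ) :
    ((Multiplicative.ofAdd a : Multiplicative ℤ) : WithZero (Multiplicative ℤ)) *
      ((Multiplicative.ofAdd b : Multiplicative ℤ) : WithZero (Multiplicative ℤ)) =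
      ((Multiplicative.ofAdd (a + b) : Multiplicative ℤ) : WithZero (Multiplicative ℤ)) := by
  rw [← WithZero.coe_mul, ofAdd_add]

lemma aux_coe_le (a b : ℤ) :
    ((Multiplicative.ofAdd a : Multiplicative ℤ) : WithZero (Multiplicative ℤ)) ≤
      ((Multiplicative.ofAdd b : Multiplicative ℤ) : WithZero (Multiplicative ℤ)) ↔ a ≤ b := by
  rw [WithZero.coe_le_coe, Multiplicative.ofAdd_le]

lemma aux_coe_lt (a b : ℤ) :
    ((Multiplicative.ofAdd a : Multiplicative ℤ) : WithZero (Multiplicative ℤ)) <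
      ((Multiplicative.ofAdd b : Multiplicative ℤ) : WithZero (Multiplicative ℤ)) ↔ a < b := by
  rw [WithZero.coe_lt_coe, Multiplicative.ofAdd_lt]

lemma aux_coe_pow (a : ℤ) (k : ℕ) :
    ((Multiplicative.ofAdd a : Multiplicative ℤ) : WithZero (Multiplicative ℤ)) ^ k =
      ((Multiplicative.ofAdd ((k : ℤ) * a) : Multiplicative ℤ) : WithZero (Multiplicative ℤ)) := by
  rw [← WithZero.coe_pow, WithZero.coe_inj, ← ofAdd_nsmul, nsmul_eq_mul]

lemma aux_coprime_den {R K : Type*} [CommRing R] [IsDedekindDomain R] [Field K]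
    [Algebra R K] [IsFractionRing R K] (v : IsDedekindDomain.HeightOneSpectrum R) {π : R}
    (hv : v.asIdeal = Ideal.span {π}) (y : K) (hy : v.valuation K y ≤ 1) :
    ∃ a b : R, b ≠ 0 ∧ v.intValuation b = 1 ∧
      y = algebraMap R K a / algebraMap R K b := by
  have hπ0 : π ≠ 0 := by
    rintro rfl
    exact v.ne_bot (by rw [hv, Ideal.span_singleton_eq_bot])
  have hπv : v.intValuation π = Multiplicative.ofAdd (-1 : ℤ) := v.intValuation_singleton hπ0 hv
  have H : ∀ n : ℕ, ∀ a b : R, b ≠ 0 →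
      v.intValuation b = (Multiplicative.ofAdd (-(n : ℤ)) : Multiplicative ℤ) →
      v.valuation K (algebraMap R K a / algebraMap R K b) ≤ 1 →
      ∃ a' b' : R, b' ≠ 0 ∧ v.intValuation b' = 1 ∧
        algebraMap R K a / algebraMap R K b = algebraMap R K a' / algebraMap R K b' := by
    intro n
    induction n with
    | zero =>
      intro a b hb0 hbv _
      exact ⟨a, b, hb0, by simpa using hbv, rfl⟩
    | succ n ih =>
      intro a b hb0 hbv hval
      have hKb : algebraMap R K b ≠ 0 :=
        (map_ne_zero_iff _ (IsFractionRing.injective R K)).mpr hb0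
      have hble : v.intValuation b ≤ Multiplicative.ofAdd (-(1 : ℕ) : ℤ) := by
        rw [hbv, Nat.cast_one, aux_coe_le]
        omega
      have hπb : π ∣ b := by
        have := (v.intValuation_le_pow_iff_dvd b 1).mp (by rwa [intValuation_apply] at hble)
        rwa [pow_one, hv, Ideal.dvd_span_singleton, Ideal.mem_span_singleton] at this
      have hπa : π ∣ a := by
        have hae : algebraMap R K a = (algebraMap R K a / algebraMap R K b) * algebraMap R K b :=
          (div_mul_cancel₀ _ hKb).symm
        have hav : v.valuation K (algebraMap R K a) ≤ Multiplicative.ofAdd (-(1 : ℕ) : ℤ) := by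
          rw [hae, Valuation.map_mul, v.valuation_of_algebraMap, hbv]
          calc v.valuation K (algebraMap R K a / algebraMap R K b) *
                ((Multiplicative.ofAdd (-(n + 1 : ℕ) : ℤ) : Multiplicative ℤ) :
                  WithZero (Multiplicative ℤ))
              ≤ 1 * ((Multiplicative.ofAdd (-(n + 1 : ℕ) : ℤ) : Multiplicative ℤ) :
                  WithZero (Multiplicative ℤ)) := by
                exact mul_le_mul_left hval _
            _ ≤ (Multiplicative.ofAdd (-(1 : ℕ) : ℤ) : Multiplicative ℤ) := by
                rw [one_mul, aux_coe_le]; push_cast; omega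
        rw [v.valuation_of_algebraMap, intValuation_apply] at hav
        have := (v.intValuation_le_pow_iff_dvd a 1).mp hav
        rwa [pow_one, hv, Ideal.dvd_span_singleton, Ideal.mem_span_singleton] at this
      obtain ⟨a1, rfl⟩ := hπa
      obtain ⟨b1, rfl⟩ := hπb
      have hb1 : b1 ≠ 0 := by
        rintro rfl; exact hb0 (mul_zero π)
      have hb1v : v.intValuation b1 = (Multiplicative.ofAdd (-(n : ℤ)) : Multiplicative ℤ) := by
        have hmul : v.intValuation (π * b1) = v.intValuation π * v.intValuation b1 :=
          Valuation.map_mul _ _ _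
        rw [hbv, hπv] at hmul
        have : ((Multiplicative.ofAdd (-1 : ℤ) : Multiplicative ℤ) :
            WithZero (Multiplicative ℤ)) * (Multiplicative.ofAdd (-(n : ℤ)) : Multiplicative ℤ) =
            ((Multiplicative.ofAdd (-(n + 1 : ℕ) : ℤ) : Multiplicative ℤ) :
              WithZero (Multiplicative ℤ)) := by
          rw [aux_coe_mul]; congr 1; push_cast; ring
        rw [← this] at hmul
        exact (mul_left_cancel₀ WithZero.coe_ne_zero hmul).symm
      have hKπ : algebraMap R K π ≠ 0 :=
        (map_ne_zero_iff _ (IsFractionRing.injective R K)).mpr hπ0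
      have key : algebraMap R K (π * a1) / algebraMap R K (π * b1) =
          algebraMap R K a1 / algebraMap R K b1 := by
        rw [map_mul, map_mul, mul_div_mul_left _ _ hKπ]
      obtain ⟨a', b', h1, h2, h3⟩ := ih a1 b1 hb1 hb1v (by rwa [key] at hval)
      exact ⟨a', b', h1, h2, by rw [key, h3]⟩
  obtain ⟨a, b, hb, hy'⟩ := IsFractionRing.div_surjective (A := R) y
  have hb0 : b ≠ 0 := nonZeroDivisors.coe_ne_zero ⟨b, hb⟩
  obtain ⟨m, hm⟩ := aux_exists_ofAdd (v.intValuation b)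
    (by rw [intValuation_apply]; exact v.intValuation_ne_zero b hb0)
  have hm0 : m ≤ 0 := by
    have := v.intValuation_le_one b
    rw [hm, ← WithZero.coe_one, ← ofAdd_zero, aux_coe_le] at this
    exact this
  have hmn : m = -(((-m).toNat : ℕ) : ℤ) := by omega
  obtain ⟨a', b', h1, h2, h3⟩ := H (-m).toNat a b hb0
    (by rw [hm]; exact congrArg (fun z : ℤ =>
      ((Multiplicative.ofAdd z : Multiplicative ℤ) : WithZero (Multiplicative ℤ))) hmn)
    (by rwa [hy'])
  exact ⟨a', b', h1, h2, by rw [← hy', h3]⟩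

/-- If `C ∈ K` satisfies `C·C̄ = 1` and `C ≡ 1 mod π` with `C ≠ 1`, then the `π`-adic
valuation `v_π(C - 1)` is odd.  Here `v` is the height-one prime corresponding to
`π = (1-ζ)O_K` and `v_π(x) = n` is expressed as `v.valuation K x = ofAdd (-n)`. -/
theorem stmt_4 (p : ℕ+) (hp : (p : ℕ).Prime) (hodd : Odd (p : ℕ))
    (K : Type) [Field K] [NumberField K] [IsCyclotomicExtension {(p : ℕ)} ℚ K]
    (ζ : 𝓞 K) (hζ : IsPrimitiveRoot ζ p)
    (v : IsDedekindDomain.HeightOneSpectrum (𝓞 K))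
    (hv : v.asIdeal = Ideal.span {1 - ζ})
    (conj : K ≃ₐ[ℚ] K) (hconj : conj (ζ : K) = (ζ : K)⁻¹)
    (C : K) (hC : C * conj C = 1)
    (hC1 : v.valuation K (C - 1) ≤ ((Multiplicative.ofAdd (-1 : ℤ) : Multiplicative ℤ) : WithZero (Multiplicative ℤ)))
    (hne : C ≠ 1) :
    ∃ n : ℕ, Odd n ∧
      v.valuation K (C - 1) = ((Multiplicative.ofAdd (-(n : ℤ)) : Multiplicative ℤ) : WithZero (Multiplicative ℤ)) := by
  classical
  haveI : Fact ((p : ℕ).Prime) := ⟨hp⟩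
  set q : ℕ := (p : ℕ) - 1 with hqdef
  have hq1 : q + 1 = (p : ℕ) := Nat.succ_pred_eq_of_pos p.pos
  have hζp : ζ ^ (p : ℕ) = 1 := hζ.pow_eq_one
  have hζq : ζ * ζ ^ q = 1 := by
    rw [← pow_succ', hq1, hζp]
  have hζ1 : ζ ≠ 1 := hζ.ne_one hp.one_lt
  have hlz : (1 - ζ : 𝓞 K) ≠ 0 := sub_ne_zero.mpr (Ne.symm hζ1)
  set σ : 𝓞 K ≃ₐ[ℤ] 𝓞 K := galRestrict ℤ ℚ K (𝓞 K) conj with hσdef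
  have hσ : ∀ a : 𝓞 K, algebraMap (𝓞 K) K (σ a) = conj (algebraMap (𝓞 K) K a) :=
    fun a => algebraMap_galRestrict_apply ℤ conj a
  have inj : Function.Injective (algebraMap (𝓞 K) K) := IsFractionRing.injective _ _
  have hζqK : algebraMap (𝓞 K) K ζ * algebraMap (𝓞 K) K ζ ^ q = 1 := by
    rw [← map_pow, ← map_mul, hζq, map_one]
  have hσζ : σ ζ = ζ ^ q := by
    apply inj
    rw [hσ, map_pow, ← NumberField.RingOfIntegers.coe_eq_algebraMap, hconj]
    exact inv_eq_of_mul_eq_one_right (by rw [NumberField.RingOfIntegers.coe_eq_algebraMap]; exact hζqK)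
  have memP : ∀ r : 𝓞 K, r ∈ v.asIdeal ↔ (1 - ζ) ∣ r := fun r => by
    rw [hv, Ideal.mem_span_singleton]
  have hgeo : ∀ k : ℕ, (1 - ζ) ∣ (1 - ζ ^ k) := fun k =>
    ⟨∑ i ∈ Finset.range k, ζ ^ i, by linear_combination geom_sum_mul ζ k⟩
  have L1 : ∀ a : 𝓞 K, σ a - a ∈ v.asIdeal := by
    have htop : Algebra.adjoin ℤ ({ζ} : Set (𝓞 K)) = ⊤ :=
      IsCyclotomicExtension.adjoin_primitive_root_eq_top hζ
    intro a
    have ha : a ∈ Algebra.adjoin ℤ ({ζ} : Set (𝓞 K)) := by rw [htop]; trivial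
    induction ha using Algebra.adjoin_induction with
    | mem x hx =>
      simp only [Set.mem_singleton_iff] at hx
      rw [hx]
      rw [hσζ]
      have he : ζ ^ q - ζ = (1 - ζ) - (1 - ζ ^ q) := by ring
      rw [he]
      exact Ideal.sub_mem _ ((memP _).mpr dvd_rfl) ((memP _).mpr (hgeo q))
    | algebraMap r =>
      rw [AlgEquiv.commutes, sub_self]
      exact Ideal.zero_mem _
    | add x y hx hy hx' hy' =>
      have he : σ (x + y) - (x + y) = (σ x - x) + (σ y - y) := by rw [map_add]; ring
      rw [he]; exact Ideal.add_mem _ hx' hy'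
    | mul x y hx hy hx' hy' =>
      have he : σ (x * y) - x * y = σ x * (σ y - y) + y * (σ x - x) := by rw [map_mul]; ring
      rw [he]
      exact Ideal.add_mem _ (Ideal.mul_mem_left _ _ hy') (Ideal.mul_mem_left _ _ hx')
  have hUnit : IsUnit (-ζ ^ q) := by
    refine IsUnit.of_mul_eq_one (-ζ) ?_
    rw [neg_mul_neg, mul_comm, ← pow_succ', hq1, hζp]
  have hsl : σ (1 - ζ) = (1 - ζ) * (-ζ ^ q) := by
    rw [map_sub, map_one, hσζ]
    linear_combination -hζq
  have hdvdiff : ∀ (n : ℕ) (a : 𝓞 K),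
      v.asIdeal ^ n ∣ Ideal.span {σ a} ↔ v.asIdeal ^ n ∣ Ideal.span {a} := by
    intro n a
    rw [hv, Ideal.span_singleton_pow, Ideal.dvd_span_singleton, Ideal.dvd_span_singleton,
      Ideal.mem_span_singleton, Ideal.mem_span_singleton]
    constructor
    · intro h
      have h2 : σ ((1 - ζ) ^ n) ∣ σ a := by
        rw [map_pow, hsl, mul_pow]
        exact ((hUnit.pow n).mul_right_dvd).mpr h
      exact (map_dvd_iff σ).mp h2
    · intro h
      have h2 : σ ((1 - ζ) ^ n) ∣ σ a := map_dvd σ h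
      rw [map_pow, hsl, mul_pow] at h2
      exact dvd_trans (dvd_mul_right _ _) h2
  have intinv : ∀ a : 𝓞 K, v.intValuation (σ a) = v.intValuation a := by
    have key : ∀ b c : 𝓞 K, b ≠ 0 →
        (∀ n : ℕ, v.asIdeal ^ n ∣ Ideal.span {b} → v.asIdeal ^ n ∣ Ideal.span {c}) →
        v.intValuation c ≤ v.intValuation b := by
      intro b c hb hbc
      obtain ⟨m, hm⟩ := aux_exists_ofAdd (v.intValuation b)
        (by rw [intValuation_apply]; exact v.intValuation_ne_zero b hb)
      have hm0 : m ≤ 0 := by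
        have := v.intValuation_le_one b
        rw [hm, ← WithZero.coe_one, ← ofAdd_zero, aux_coe_le] at this
        exact this
      have hmn : m = -(((-m).toNat : ℕ) : ℤ) := by omega
      have hb' : v.intValuationDef b ≤ Multiplicative.ofAdd (-(((-m).toNat : ℕ) : ℤ)) := by
        rw [← intValuation_apply, hm]
        exact le_of_eq (congrArg (fun z : ℤ =>
          ((Multiplicative.ofAdd z : Multiplicative ℤ) : WithZero (Multiplicative ℤ))) hmn)
      have h2 := hbc _ ((v.intValuation_le_pow_iff_dvd b (-m).toNat).mp hb')
      have h3 := (v.intValuation_le_pow_iff_dvd c (-m).toNat).mpr h2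
      rw [hm]
      refine le_trans h3 (le_of_eq ?_)
      exact (congrArg (fun z : ℤ =>
        ((Multiplicative.ofAdd z : Multiplicative ℤ) : WithZero (Multiplicative ℤ))) hmn).symm
    intro a
    by_cases h0 : a = 0
    · rw [h0, map_zero, map_zero]
    have hσ0 : σ a ≠ 0 := fun h => h0 (by simpa using congrArg σ.symm h)
    exact le_antisymm (key a (σ a) h0 (fun n h => (hdvdiff n a).mpr h))
      (key (σ a) a hσ0 (fun n h => (hdvdiff n a).mp h))
  have Kinv : ∀ y : K, v.valuation K (conj y) = v.valuation K y := by
    intro y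
    obtain ⟨a, b, hbmem, rfl⟩ := IsFractionRing.div_surjective (A := 𝓞 K) y
    rw [map_div₀, map_div₀, ← hσ a, ← hσ b, map_div₀, v.valuation_of_algebraMap,
      v.valuation_of_algebraMap, v.valuation_of_algebraMap, v.valuation_of_algebraMap,
      intinv, intinv]
  have memval : ∀ r : 𝓞 K, r ∈ v.asIdeal → v.valuation K (algebraMap (𝓞 K) K r) ≤
      ((Multiplicative.ofAdd (-1 : ℤ) : Multiplicative ℤ) : WithZero (Multiplicative ℤ)) := by
    intro r hr
    rw [v.valuation_of_algebraMap, intValuation_apply]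
    have := (v.intValuation_le_pow_iff_dvd r 1).mpr
      (by rw [pow_one, Ideal.dvd_span_singleton]; exact hr)
    exact this
  have Lunit : ∀ u : K, v.valuation K u ≤ 1 → v.valuation K (conj u - u) ≤
      ((Multiplicative.ofAdd (-1 : ℤ) : Multiplicative ℤ) : WithZero (Multiplicative ℤ)) := by
    intro u hu
    obtain ⟨a, b, hb0, hbv, rfl⟩ := aux_coprime_den v hv u hu
    have hKb : algebraMap (𝓞 K) K b ≠ 0 := (map_ne_zero_iff _ inj).mpr hb0
    have hσb0 : σ b ≠ 0 := fun h => hb0 (by simpa using congrArg σ.symm h)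
    have hKσb : algebraMap (𝓞 K) K (σ b) ≠ 0 := (map_ne_zero_iff _ inj).mpr hσb0
    have hnum : (σ a * b - a * σ b) ∈ v.asIdeal := by
      have he : σ a * b - a * σ b = b * (σ a - a) - a * (σ b - b) := by ring
      rw [he]
      exact Ideal.sub_mem _ (Ideal.mul_mem_left _ _ (L1 a)) (Ideal.mul_mem_left _ _ (L1 b))
    have heq : conj (algebraMap (𝓞 K) K a / algebraMap (𝓞 K) K b) -
        algebraMap (𝓞 K) K a / algebraMap (𝓞 K) K b =
        algebraMap (𝓞 K) K (σ a * b - a * σ b) / algebraMap (𝓞 K) K (σ b * b) := by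
      rw [map_div₀, ← hσ a, ← hσ b, map_sub, map_mul, map_mul, map_mul]
      field_simp
    rw [heq, map_div₀]
    have hden : v.valuation K (algebraMap (𝓞 K) K (σ b * b)) = 1 := by
      rw [v.valuation_of_algebraMap, Valuation.map_mul, intinv, hbv, mul_one]
    rw [hden, div_one]
    exact memval _ hnum
  have hζpow : ∀ k : ℕ, v.valuation K (algebraMap (𝓞 K) K (ζ ^ k) - 1) ≤
      ((Multiplicative.ofAdd (-1 : ℤ) : Multiplicative ℤ) : WithZero (Multiplicative ℤ)) := by
    intro k
    have he : algebraMap (𝓞 K) K (ζ ^ k) - 1 = algebraMap (𝓞 K) K (ζ ^ k - 1) := by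
      rw [map_sub, map_one]
    rw [he]
    exact memval _ ((memP _).mpr (dvd_sub_comm.mp (hgeo k)))
  -- main body
  set x : K := C - 1 with hxdef
  have hx0 : x ≠ 0 := sub_ne_zero.mpr hne
  have hvx0 : v.valuation K x ≠ 0 := (Valuation.ne_zero_iff _).mpr hx0
  obtain ⟨m, hm⟩ := aux_exists_ofAdd _ hvx0
  have hm1 : m ≤ -1 := by
    rw [hm] at hC1
    rwa [aux_coe_le] at hC1
  set n : ℕ := (-m).toNat with hndef
  have hn1 : 1 ≤ n := by omega
  have hmn : m = -(n : ℤ) := by omega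
  have hvx : v.valuation K x = ((Multiplicative.ofAdd (-(n : ℤ)) : Multiplicative ℤ) :
      WithZero (Multiplicative ℤ)) :=
    hm.trans (congrArg (fun z : ℤ =>
      ((Multiplicative.ofAdd z : Multiplicative ℤ) : WithZero (Multiplicative ℤ))) hmn)
  refine ⟨n, ?_, hvx⟩
  by_contra hoddn
  have heven : Even n := Nat.not_odd_iff_even.mp hoddn
  have hvxlt : v.valuation K x < 1 := by
    rw [hvx, ← WithZero.coe_one, ← ofAdd_zero, aux_coe_lt]
    omega
  have hvC : v.valuation K C = 1 := by
    have hC' : C = x + 1 := by rw [hxdef]; ring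
    rw [hC', Valuation.map_add_eq_of_lt_right _ (by rwa [Valuation.map_one]), Valuation.map_one]
  have hconjC : conj C = C⁻¹ := eq_inv_of_mul_eq_one_right hC
  have hcx : conj x = conj C - 1 := by rw [hxdef, map_sub, map_one]
  have hid : x + conj x = -(x * conj x) := by
    rw [hxdef, hcx]
    linear_combination hC
  have hvcx : v.valuation K (conj x) = ((Multiplicative.ofAdd (-(n : ℤ)) : Multiplicative ℤ) :
      WithZero (Multiplicative ℤ)) := by rw [Kinv, hvx]
  have hsum : v.valuation K (x + conj x) = ((Multiplicative.ofAdd (-(n : ℤ) + -(n : ℤ)) :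
      Multiplicative ℤ) : WithZero (Multiplicative ℤ)) := by
    rw [hid, Valuation.map_neg, Valuation.map_mul, hvx, hvcx, aux_coe_mul]
  set lamK : K := 1 - algebraMap (𝓞 K) K ζ with hlam
  have hlamval : v.valuation K lamK =
      ((Multiplicative.ofAdd (-1 : ℤ) : Multiplicative ℤ) : WithZero (Multiplicative ℤ)) := by
    have he : lamK = algebraMap (𝓞 K) K (1 - ζ) := by rw [map_sub, map_one]
    rw [he, v.valuation_of_algebraMap, v.intValuation_singleton hlz hv]; rfl
  have hlam0 : lamK ≠ 0 := by
    intro h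
    rw [h, Valuation.map_zero] at hlamval
    exact WithZero.coe_ne_zero hlamval.symm
  have hlampow : v.valuation K (lamK ^ n) = ((Multiplicative.ofAdd (-(n : ℤ)) : Multiplicative ℤ) :
      WithZero (Multiplicative ℤ)) := by
    rw [Valuation.map_pow, hlamval, aux_coe_pow]
    congr 1
    ring
  have hlampow0 : lamK ^ n ≠ 0 := pow_ne_zero _ hlam0
  set u : K := x / lamK ^ n with hudef
  have hxu : x = lamK ^ n * u := by
    rw [hudef, mul_div_cancel₀ _ hlampow0]
  have hvu : v.valuation K u = 1 := by
    rw [hudef, map_div₀, hvx, hlampow, div_self WithZero.coe_ne_zero]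
  have hconjlam : conj lamK = lamK * (-(algebraMap (𝓞 K) K ζ ^ q)) := by
    have h1 : conj lamK = 1 - algebraMap (𝓞 K) K ζ ^ q := by
      rw [hlam, map_sub, map_one, ← NumberField.RingOfIntegers.coe_eq_algebraMap, hconj,
        inv_eq_of_mul_eq_one_right (by rw [NumberField.RingOfIntegers.coe_eq_algebraMap]; exact hζqK)]
    rw [h1, hlam]
    linear_combination -hζqK
  have hconjlampow : conj (lamK ^ n) = lamK ^ n * algebraMap (𝓞 K) K (ζ ^ (q * n)) := by
    rw [map_pow, hconjlam, mul_pow, heven.neg_pow, ← pow_mul, map_pow]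
  have hconjx : conj x - x = lamK ^ n * (algebraMap (𝓞 K) K (ζ ^ (q * n)) * conj u - u) := by
    have h1 : conj x = conj (lamK ^ n) * conj u := by rw [hxu, map_mul]
    rw [h1, hconjlampow]
    nth_rewrite 1 [hxu]
    ring
  have hfac : v.valuation K (algebraMap (𝓞 K) K (ζ ^ (q * n)) * conj u - u) ≤
      ((Multiplicative.ofAdd (-1 : ℤ) : Multiplicative ℤ) : WithZero (Multiplicative ℤ)) := by
    have hsplit : algebraMap (𝓞 K) K (ζ ^ (q * n)) * conj u - u =
        algebraMap (𝓞 K) K (ζ ^ (q * n)) * (conj u - u) +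
          (algebraMap (𝓞 K) K (ζ ^ (q * n)) - 1) * u := by ring
    rw [hsplit]
    refine le_trans ((v.valuation K).map_add _ _) (max_le ?_ ?_)
    · rw [Valuation.map_mul]
      calc v.valuation K (algebraMap (𝓞 K) K (ζ ^ (q * n))) * v.valuation K (conj u - u)
          ≤ 1 * ((Multiplicative.ofAdd (-1 : ℤ) : Multiplicative ℤ) :
              WithZero (Multiplicative ℤ)) :=
            mul_le_mul' (v.valuation_le_one (K := K) _) (Lunit u (le_of_eq hvu))
        _ = _ := one_mul _
    · rw [Valuation.map_mul, hvu, mul_one]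
      exact hζpow (q * n)
  have hdiff : v.valuation K (conj x - x) ≤
      ((Multiplicative.ofAdd (-(n : ℤ) + -1) : Multiplicative ℤ) :
        WithZero (Multiplicative ℤ)) := by
    rw [hconjx, Valuation.map_mul, hlampow, ← aux_coe_mul]
    exact mul_le_mul' le_rfl hfac
  have h2P : (2 : 𝓞 K) ∉ v.asIdeal := by
    intro h2
    have hs0 : (∑ i ∈ Finset.range (p : ℕ), ζ ^ i) = 0 := by
      have h := geom_sum_mul ζ (p : ℕ)
      rw [hζp, sub_self] at h
      rcases mul_eq_zero.mp h with h' | h'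
      · exact h'
      · exact absurd (by linear_combination -h' : (1 : 𝓞 K) - ζ = 0) hlz
    have hpP : (((p : ℕ) : ℤ) : 𝓞 K) ∈ v.asIdeal := by
      have he : (((p : ℕ) : ℤ) : 𝓞 K) = ∑ i ∈ Finset.range (p : ℕ), (1 - ζ ^ i) := by
        rw [Finset.sum_sub_distrib, hs0, sub_zero, Finset.sum_const, Finset.card_range,
          nsmul_eq_mul, mul_one]
        push_cast
        ring
      rw [he]
      exact Ideal.sum_mem _ (fun i _ => (memP _).mpr (hgeo i))
    obtain ⟨k, hk⟩ := hodd
    have h1P : (1 : 𝓞 K) ∈ v.asIdeal := by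
      have he : (1 : 𝓞 K) = (((p : ℕ) : ℤ) : 𝓞 K) - ((k : ℤ) : 𝓞 K) * 2 := by
        have hpk : ((p : ℕ) : ℤ) = 2 * (k : ℤ) + 1 := by exact_mod_cast hk
        push_cast [hpk]
        ring
      rw [he]
      exact Ideal.sub_mem _ hpP (Ideal.mul_mem_left _ _ h2)
    exact v.isPrime.ne_top ((Ideal.eq_top_iff_one _).mpr h1P)
  have hv2 : v.valuation K (2 : K) = 1 := by
    have hint2 : v.intValuation (2 : 𝓞 K) = 1 := by
      refine le_antisymm (v.intValuation_le_one _) ?_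
      by_contra hlt
      rw [not_le] at hlt
      have := (v.intValuation_lt_one_iff_dvd _).mp (by rwa [intValuation_apply] at hlt)
      rw [Ideal.dvd_span_singleton] at this
      exact h2P this
    have h2alg : (2 : K) = algebraMap (𝓞 K) K (2 : 𝓞 K) := by rw [map_ofNat]
    rw [h2alg, v.valuation_of_algebraMap, hint2]
  have hlt2x : v.valuation K (conj x - x) < v.valuation K (2 * x) := by
    rw [Valuation.map_mul, hv2, one_mul, hvx]
    refine lt_of_le_of_lt hdiff ?_
    rw [aux_coe_lt]
    omega
  have hfinal : v.valuation K (x + conj x) =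
      ((Multiplicative.ofAdd (-(n : ℤ)) : Multiplicative ℤ) : WithZero (Multiplicative ℤ)) := by
    have he : x + conj x = 2 * x + (conj x - x) := by ring
    rw [he, Valuation.map_add_eq_of_lt_left _ hlt2x, Valuation.map_mul, hv2, one_mul, hvx]
  have : -(n : ℤ) + -(n : ℤ) = -(n : ℤ) := by
    have h := hsum.symm.trans hfinal
    rw [WithZero.coe_inj] at h
    exact Multiplicative.ofAdd.injective h
  omega
end

section
/- Let p be an odd prime, K the p-th cyclotomic field, σ a generator of Gal(K/ℚ), and μ ∈ ℤ with μ ≢ 0 mod p. If B ∈ K* satisfies B^((σ-μ)²) ∈ K*^p (i.e., σ²(B)·σ(B)^(-2μ)·B^(μ²) is a p-th power in K), then already B^(σ-μ) ∈ K*^p, i.e., σ(B)·B^(-μ) is a p-th power in K. -/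
open scoped NumberField

lemma key_aux {G : Type*} [CommGroup G] (S : G →* G) (p q : ℕ) (hp : p.Prime)
    (μ : ℤ) (hq : 0 < q) (b c : G)
    (hSb : S^[q] b = b)
    (hd : S (S b * b ^ (-μ)) = (S b * b ^ (-μ)) ^ μ * c ^ p)
    (hμp : ¬ (p:ℤ) ∣ μ) (hqp : ¬ (p:ℤ) ∣ (q:ℤ))
    (hFer : (p:ℤ) ∣ μ ^ q - 1) :
    ∃ e : G, S b * b ^ (-μ) = e ^ p := by
  set d : G := S b * b ^ (-μ) with hd_def
  have step1 : ∀ k : ℕ, ∃ w : G, S^[k] d = d ^ (μ ^ k) * w ^ p := by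
    intro k
    induction k with
    | zero => exact ⟨1, by simp⟩
    | succ k ih =>
      obtain ⟨w, hw⟩ := ih
      refine ⟨c ^ (μ ^ k) * S w, ?_⟩
      rw [Function.iterate_succ_apply', hw, map_mul, map_zpow, map_pow, hd]
      have e1 : ((d ^ μ) ^ (μ ^ k) : G) = d ^ μ ^ (k + 1) := by
        rw [← zpow_mul, pow_succ, mul_comm]
      have e2 : ((c ^ p) ^ (μ ^ k) : G) = (c ^ μ ^ k) ^ p := by
        rw [← zpow_natCast c, ← zpow_mul, ← zpow_natCast (c ^ μ ^ k), ← zpow_mul, mul_comm]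
      rw [mul_zpow, e1, e2, mul_pow, mul_assoc]
  choose w hw using step1
  set W : G := ∏ k ∈ Finset.range q, (w k) ^ (μ ^ (q - 1 - k)) with hW
  have eval1 : (∏ k ∈ Finset.range q, (S^[k] d) ^ (μ ^ (q - 1 - k)))
      = (d ^ (μ ^ (q - 1))) ^ q * W ^ p := by
    have hterm : ∀ k ∈ Finset.range q, (S^[k] d) ^ (μ ^ (q - 1 - k))
        = d ^ (μ ^ (q - 1)) * ((w k) ^ (μ ^ (q - 1 - k))) ^ p := by
      intro k hk
      rw [Finset.mem_range] at hk
      rw [hw k, mul_zpow, ← zpow_mul, ← pow_add]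
      have hexp : k + (q - 1 - k) = q - 1 := by omega
      have e2 : ((w k ^ p) ^ (μ ^ (q - 1 - k)) : G) = (w k ^ μ ^ (q - 1 - k)) ^ p := by
        rw [← zpow_natCast (w k), ← zpow_mul, ← zpow_natCast (w k ^ μ ^ (q - 1 - k)),
          ← zpow_mul, mul_comm]
      rw [hexp, e2]
    rw [Finset.prod_congr rfl hterm, Finset.prod_mul_distrib, Finset.prod_const,
      Finset.card_range, Finset.prod_pow]
  have eval2 : (∏ k ∈ Finset.range q, (S^[k] d) ^ (μ ^ (q - 1 - k)))
      = b ^ (1 - μ ^ q) := by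
    set g : ℕ → G := fun k => (S^[k] b) ^ (μ ^ (q - k)) with hg
    have tele : ∀ k ∈ Finset.range q, (S^[k] d) ^ (μ ^ (q - 1 - k)) = g (k + 1) / g k := by
      intro k hk
      rw [Finset.mem_range] at hk
      have hkd : (S^[k] d) = S^[k + 1] b * (S^[k] b) ^ (-μ) := by
        rw [hd_def, iterate_map_mul, iterate_map_zpow, ← Function.iterate_succ_apply]
      rw [hg, hkd, mul_zpow, ← zpow_mul]
      simp only
      rw [div_eq_mul_inv, ← zpow_neg]
      congr 2
      · congr 1; omega
      · have h2 : q - k = 1 + (q - 1 - k) := by omega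
        rw [h2, pow_add, pow_one]; ring
    rw [Finset.prod_congr rfl tele, Finset.prod_range_div, hg]
    simp only [Function.iterate_zero_apply, hSb]
    rw [Nat.sub_self, Nat.sub_zero, pow_zero, zpow_one, div_eq_mul_inv, ← zpow_neg, ← zpow_one b,
      ← zpow_mul, ← zpow_mul, ← zpow_add]
    congr 1; ring
  obtain ⟨s, hs⟩ := hFer
  have key : d ^ (μ ^ (q - 1) * (q : ℤ)) = ((b ^ (-s)) * W⁻¹) ^ p := by
    have hb : b ^ (1 - μ ^ q) = (b ^ (-s)) ^ p := by
      rw [← zpow_natCast (b ^ (-s)), ← zpow_mul]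
      congr 1
      linear_combination -hs
    rw [eval2] at eval1
    rw [mul_pow, inv_pow, ← hb, eval1]
    rw [← zpow_natCast (d ^ (μ ^ (q-1))), ← zpow_mul]
    group
  have hpZ : Prime ((p : ℕ) : ℤ) := Nat.prime_iff_prime_int.mp hp
  have hnd : ¬ ((p:ℕ):ℤ) ∣ μ ^ (q - 1) * (q : ℤ) := by
    intro hdvd
    rcases hpZ.dvd_mul.mp hdvd with h1 | h2
    · exact hμp (hpZ.dvd_of_dvd_pow h1)
    · exact hqp h2
  have hcop : IsCoprime ((p:ℕ):ℤ) (μ ^ (q - 1) * (q : ℤ)) :=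
    (hpZ.coprime_iff_not_dvd).mpr hnd
  obtain ⟨a, b', hab⟩ := hcop.symm
  set N : ℤ := μ ^ (q - 1) * (q : ℤ) with hN
  refine ⟨(b ^ (-s) * W⁻¹) ^ a * d ^ b', ?_⟩
  calc d = d ^ (a * N + b' * (p:ℤ)) := by rw [hab, zpow_one]
    _ = (d ^ N) ^ a * (d ^ b') ^ (p:ℕ) := by
        rw [zpow_add d (a * N) (b' * ((p:ℕ):ℤ)), mul_comm a N, zpow_mul d N a,
          zpow_mul d b' ((p:ℕ):ℤ), zpow_natCast (d ^ b') p]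
    _ = ((b ^ (-s) * W⁻¹) ^ a * d ^ b') ^ (p:ℕ) := by
        have swap : ∀ x : G, (x ^ (p:ℕ)) ^ a = (x ^ a) ^ (p:ℕ) := fun x => by
          rw [← zpow_natCast x, ← zpow_mul, mul_comm, zpow_mul, zpow_natCast]
        rw [key, swap, ← mul_pow]

/-- If `B ∈ K*` satisfies `B^((σ-μ)²) ∈ K*^p`, i.e. `σ²(B)·σ(B)^(-2μ)·B^(μ²)` is a `p`-th
power, then already `B^(σ-μ) = σ(B)·B^(-μ)` is a `p`-th power in `K`. -/
theorem stmt_6 (p : ℕ+) (hp : (p : ℕ).Prime) (hodd : Odd (p : ℕ))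
    (K : Type) [Field K] [NumberField K] [IsCyclotomicExtension {(p : ℕ)} ℚ K]
    (σ : K ≃ₐ[ℚ] K) (hgen : ∀ τ : K ≃ₐ[ℚ] K, τ ∈ Subgroup.zpowers σ)
    (μ : ℤ) (hμ : ¬ ((p : ℕ) : ℤ) ∣ μ)
    (B : K) (hB : B ≠ 0)
    (h : ∃ c : K, σ (σ B) * (σ B) ^ (-(2 * μ)) * B ^ (μ ^ 2) = c ^ (p : ℕ)) :
    ∃ c : K, σ B * B ^ (-μ) = c ^ (p : ℕ) := by
  haveI : IsGalois ℚ K := IsCyclotomicExtension.isGalois {(p : ℕ)} ℚ K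
  obtain ⟨c, hc⟩ := h
  have hσB : σ B ≠ 0 := by simp [hB]
  have hσσB : σ (σ B) ≠ 0 := by simp [hσB]
  have hc0 : c ≠ 0 := by
    intro h0
    rw [h0, zero_pow hp.pos.ne'] at hc
    exact (mul_ne_zero (mul_ne_zero hσσB (zpow_ne_zero _ hσB)) (zpow_ne_zero _ hB)) hc
  set q : ℕ := (p : ℕ) - 1 with hqdef
  have hq : 0 < q := by have := hp.two_le; omega
  -- the units
  set S : Kˣ →* Kˣ := Units.map (σ : K →* K) with hS
  set b : Kˣ := Units.mk0 B hB with hb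
  set c' : Kˣ := Units.mk0 c hc0 with hc'
  have hSval : ∀ x : Kˣ, ((S x : Kˣ) : K) = σ (x : K) := fun x => rfl
  -- iterates
  have iter : ∀ (k : ℕ) (x : Kˣ), ((S^[k] x : Kˣ) : K) = (σ ^ k) (x : K) := by
    intro k
    induction k with
    | zero => intro x; simp
    | succ k ih =>
      intro x
      rw [Function.iterate_succ_apply', hSval, ih, pow_succ', AlgEquiv.mul_apply]
  -- σ ^ q = 1
  have hcard : Fintype.card (K ≃ₐ[ℚ] K) = q := by
    rw [← Nat.card_eq_fintype_card, IsGalois.card_aut_eq_finrank,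
      IsCyclotomicExtension.finrank (K := ℚ) K (Polynomial.cyclotomic.irreducible_rat p.pos),
      Nat.totient_prime hp]
  have hσq : σ ^ q = 1 := by rw [← hcard]; exact pow_card_eq_one
  have hSb : S^[q] b = b := by
    ext
    rw [iter, hσq, AlgEquiv.one_apply, hb, Units.val_mk0]
  -- hypothesis at the level of units
  have hu : S (S b) * (S b) ^ (-(2 * μ)) * b ^ (μ ^ 2) = c' ^ (p : ℕ) := by
    ext
    push_cast [Units.val_mul, Units.val_zpow_eq_zpow_val, Units.val_pow_eq_pow_val, hSval]
    simpa [hb, hc'] using hc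
  have hd : S (S b * b ^ (-μ)) = (S b * b ^ (-μ)) ^ μ * c' ^ (p : ℕ) := by
    have hSSb : S (S b) = c' ^ (p : ℕ) * (b ^ (μ ^ 2))⁻¹ * ((S b) ^ (-(2 * μ)))⁻¹ := by
      rw [← hu]; group
    rw [map_mul, map_zpow, hSSb]
    have : (μ : ℤ) ^ 2 = μ * μ := sq μ
    rw [this, mul_zpow, ← zpow_mul]
    group
    ac_rfl
  -- Fermat
  haveI : Fact (p : ℕ).Prime := ⟨hp⟩
  have hμ0 : (μ : ZMod (p : ℕ)) ≠ 0 := by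
    rw [Ne, ZMod.intCast_zmod_eq_zero_iff_dvd]; exact hμ
  have hFer : ((p : ℕ) : ℤ) ∣ μ ^ q - 1 := by
    rw [← ZMod.intCast_zmod_eq_zero_iff_dvd]
    push_cast
    rw [ZMod.pow_card_sub_one_eq_one hμ0]
    ring
  have hqp : ¬ ((p : ℕ) : ℤ) ∣ (q : ℤ) := by
    rw [Int.natCast_dvd_natCast]
    intro hdvd
    have := Nat.le_of_dvd hq hdvd
    have := hp.two_le
    omega
  obtain ⟨e, he⟩ := key_aux S (p : ℕ) q hp μ hq b c' hSb hd hμ hqp hFer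
  refine ⟨(e : K), ?_⟩
  have := congrArg Units.val he
  rw [Units.val_mul, Units.val_zpow_eq_zpow_val, hSval, Units.val_pow_eq_pow_val,
    hb, Units.val_mk0] at this
  exact this
end

section
/- Let p be an odd prime, ζ a primitive p-th root of unity, π = (1-ζ)O_K, and u a primitive root mod p with σ(ζ) = ζ^u. Suppose C ∈ K satisfies v_π(C) = 0, C ≡ 1 + c₀λ^ν mod π^(ν+1) for some c₀ ∈ ℤ with c₀ ≢ 0 mod p, where λ = ζ-1 and 1 ≤ ν ≤ p-2, and σ(C) ≡ C^μ mod π^(ν+1) for some μ ∈ ℤ, μ ≢ 0 mod p. Then u^ν ≡ μ mod p. -/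
open scoped NumberField
open IsDedekindDomain IsDedekindDomain.HeightOneSpectrum

lemma aux_one_add_pow {R : Type*} [CommRing R] (x : R) (n : ℕ) :
    ∃ d, (1+x)^n = 1 + n*x + x^2*d := by
  induction n with
  | zero => exact ⟨0, by ring⟩
  | succ n ih =>
    obtain ⟨d, hd⟩ := ih
    refine ⟨d*(1+x) + n, ?_⟩
    rw [pow_succ, hd]; push_cast; ring

lemma aux_add_pow {R : Type*} [CommRing R] (a x : R) (n : ℕ) :
    ∃ e, (a+x)^n = a^n + x*e := by
  induction n with
  | zero => exact ⟨0, by ring⟩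
  | succ n ih =>
    obtain ⟨e, he⟩ := ih
    exact ⟨e*(a+x) + a^n, by rw [pow_succ, he]; ring⟩

lemma aux_sub_dvd {R : Type*} [CommRing R] (x y : R) (n : ℕ) : x - y ∣ x^n - y^n :=
  sub_dvd_pow_sub_pow x y n

lemma aux_wz_le {x y : WithZero (Multiplicative ℤ)} (hy : y ≤ 1) (h0 : y = 0 → x = 0)
    (h : ∀ n : ℕ, y ≤ ((Multiplicative.ofAdd (-(n:ℤ)) : Multiplicative ℤ) : WithZero (Multiplicative ℤ)) →
      x ≤ ((Multiplicative.ofAdd (-(n:ℤ)) : Multiplicative ℤ) : WithZero (Multiplicative ℤ))) :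
    x ≤ y := by
  rcases eq_or_ne y 0 with rfl | hy0
  · simp [h0 rfl]
  · lift y to Multiplicative ℤ using hy0
    set m : ℤ := Multiplicative.toAdd y with hm
    have hmle : m ≤ 0 := by
      rwa [← WithZero.coe_one, WithZero.coe_le_coe, ← Multiplicative.toAdd_le, toAdd_one] at hy
    have hy' : (y : WithZero (Multiplicative ℤ)) = ((Multiplicative.ofAdd (-(((-m).toNat):ℤ)) : Multiplicative ℤ) : WithZero (Multiplicative ℤ)) := by
      rw [Int.toNat_of_nonneg (by omega), neg_neg, hm]; simp
    rw [hy']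
    exact h _ (le_of_eq hy')

lemma val_sigma (p : ℕ+) (hp : (p:ℕ).Prime) (K : Type) [Field K] [NumberField K]
    (ζ : 𝓞 K) (hζ : IsPrimitiveRoot ζ p)
    (v : HeightOneSpectrum (𝓞 K)) (hv : v.asIdeal = Ideal.span {1 - ζ})
    (u : ℕ) (hu : IsUnit (u : ZMod p)) (σ : K ≃ₐ[ℚ] K) (hσ : σ (ζ : K) = (ζ : K) ^ u)
    (x : K) : v.valuation K (σ x) = v.valuation K x := by
  haveI : Fact (p:ℕ).Prime := ⟨hp⟩
  set τ := galRestrict ℤ ℚ K (𝓞 K) σ with hτdef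
  have hτ : ∀ r : 𝓞 K, (algebraMap (𝓞 K) K) (τ r) = σ (algebraMap (𝓞 K) K r) :=
    fun r => algebraMap_galRestrict_apply ℤ σ r
  have hinj : Function.Injective (algebraMap (𝓞 K) K) := IsFractionRing.injective _ _
  have hτζ : τ ζ = ζ ^ u := by
    apply hinj
    rw [hτ, map_pow]
    exact hσ
  -- ζ ^ (u ^ (p-1)) = ζ
  have hne : (u : ZMod p) ≠ 0 := hu.ne_zero
  have hmod : (u:ℕ) ^ ((p:ℕ) - 1) ≡ 1 [MOD (p:ℕ)] := by
    have : ((u ^ ((p:ℕ)-1) : ℕ) : ZMod p) = ((1 : ℕ) : ZMod p) := by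
      push_cast
      simpa using ZMod.pow_card_sub_one_eq_one hne
    exact (ZMod.natCast_eq_natCast_iff _ _ _).mp this
  have hord : orderOf ζ = (p:ℕ) := (hζ.eq_orderOf).symm
  have hζpow : ζ ^ ((u:ℕ) ^ ((p:ℕ) - 1)) = ζ := by
    conv_rhs => rw [← pow_one ζ]
    rw [← pow_mod_orderOf, hord, hmod, ← hord, pow_mod_orderOf]
  have hdvd1 : (1 - ζ) ∣ (1 - ζ ^ (u:ℕ)) := by
    simpa using sub_dvd_pow_sub_pow 1 ζ (u:ℕ)
  have hdvd2 : (1 - ζ ^ (u:ℕ)) ∣ (1 - ζ) := by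
    have h2 : (1 - ζ ^ (u:ℕ)) ∣ (1 - (ζ ^ (u:ℕ)) ^ ((u:ℕ) ^ ((p:ℕ) - 2))) := by
      simpa using sub_dvd_pow_sub_pow 1 (ζ ^ (u:ℕ)) ((u:ℕ) ^ ((p:ℕ) - 2))
    have h3 : (ζ ^ (u:ℕ)) ^ ((u:ℕ) ^ ((p:ℕ) - 2)) = ζ := by
      rw [← pow_mul, ← pow_succ']
      have : (p:ℕ) - 2 + 1 = (p:ℕ) - 1 := by have := hp.two_le; omega
      rw [this, hζpow]
    rwa [h3] at h2
  have hspan : Ideal.span {1 - τ ζ} = Ideal.span {1 - ζ} := by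
    rw [hτζ]
    exact le_antisymm (Ideal.span_singleton_le_span_singleton.mpr hdvd1)
      (Ideal.span_singleton_le_span_singleton.mpr hdvd2)
  set τᵣ := (τ : 𝓞 K ≃ₐ[ℤ] 𝓞 K).toRingEquiv with hτᵣ
  have hmap : Ideal.map τᵣ v.asIdeal = v.asIdeal := by
    rw [hv, Ideal.map_span, Set.image_singleton]
    show Ideal.span {τ (1 - ζ)} = _
    rw [map_sub, map_one, hspan]
  have horder : ∀ I J : Ideal (𝓞 K),
      Ideal.map τᵣ I ≤ Ideal.map τᵣ J ↔ I ≤ J := by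
    intro I J
    rw [← Ideal.comap_symm, ← Ideal.comap_symm]
    constructor
    · intro h x hx
      have h1 : τᵣ x ∈ Ideal.comap τᵣ.symm I := by
        simp [Ideal.mem_comap, hx]
      have h2 := h h1
      simpa [Ideal.mem_comap] using h2
    · exact fun h => Ideal.comap_mono h
  have hdvd_iff : ∀ (r : 𝓞 K) (n : ℕ),
      v.asIdeal ^ n ∣ Ideal.span {τ r} ↔ v.asIdeal ^ n ∣ Ideal.span {r} := by
    intro r n
    rw [Ideal.dvd_iff_le, Ideal.dvd_iff_le]
    have h1 : Ideal.span {τ r} = Ideal.map τᵣ (Ideal.span {r}) := by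
      rw [Ideal.map_span, Set.image_singleton]; rfl
    have h2 : v.asIdeal ^ n = Ideal.map τᵣ (v.asIdeal ^ n) := by
      rw [Ideal.map_pow, hmap]
    rw [h1]
    conv_lhs => rw [h2]
    exact horder _ _
  have hiff : ∀ (s : 𝓞 K) (n : ℕ), v.intValuation s ≤
      ((Multiplicative.ofAdd (-(n:ℤ)) : Multiplicative ℤ) : WithZero (Multiplicative ℤ)) ↔
      v.asIdeal ^ n ∣ Ideal.span {s} := by
    intro s n
    rw [intValuation_apply]
    exact intValuation_le_pow_iff_dvd v s n
  have h0 : ∀ s : 𝓞 K, v.intValuation s = 0 ↔ s = 0 := by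
    intro s
    constructor
    · intro h
      by_contra hs
      exact v.intValuation_ne_zero s hs h
    · rintro rfl; exact Valuation.map_zero _
  have int_inv : ∀ r : 𝓞 K, v.intValuation (τ r) = v.intValuation r := by
    intro r
    apply le_antisymm
    · apply aux_wz_le (v.intValuation_le_one r)
      · intro h
        exact (h0 _).mpr (by simp [(h0 _).mp h])
      · intro n hn
        exact (hiff _ _).mpr ((hdvd_iff r n).mpr ((hiff _ _).mp hn))
    · apply aux_wz_le (v.intValuation_le_one (τ r))
      · intro h
        have : r = 0 := by simpa using (h0 _).mp h
        exact (h0 _).mpr (by simp [this])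
      · intro n hn
        exact (hiff _ _).mpr ((hdvd_iff r n).mp ((hiff _ _).mp hn))
  obtain ⟨a, b, hb, rfl⟩ := IsFractionRing.div_surjective (A := 𝓞 K) x
  have h1 : σ (algebraMap (𝓞 K) K a / algebraMap (𝓞 K) K b)
      = algebraMap (𝓞 K) K (τ a) / algebraMap (𝓞 K) K (τ b) := by
    rw [map_div₀, hτ, hτ]
  rw [h1, map_div₀, map_div₀, valuation_of_algebraMap, valuation_of_algebraMap,
    valuation_of_algebraMap, valuation_of_algebraMap, int_inv, int_inv]

lemma dvd_int_of_dvd (p : ℕ+) (hp : (p:ℕ).Prime) (K : Type) [Field K] [NumberField K]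
    (ζ : 𝓞 K) (hζ : IsPrimitiveRoot ζ p)
    (v : HeightOneSpectrum (𝓞 K)) (hv : v.asIdeal = Ideal.span {1 - ζ})
    (n : ℤ) (h : (1 - ζ) ∣ (n : 𝓞 K)) : ((p:ℕ) : ℤ) ∣ n := by
  have hpdvd : (1 - ζ) ∣ ((p:ℕ) : 𝓞 K) := by
    have hsum : ∑ i ∈ Finset.range (p:ℕ), ζ^i = 0 := hζ.geom_sum_eq_zero hp.one_lt
    have hpe : ((p:ℕ) : 𝓞 K) = ∑ i ∈ Finset.range (p:ℕ), (1 - ζ^i) := by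
      rw [Finset.sum_sub_distrib, hsum, sub_zero, Finset.sum_const, Finset.card_range]
      push_cast
      ring
    rw [hpe]
    apply Finset.dvd_sum
    intro i _
    simpa using sub_dvd_pow_sub_pow 1 ζ i
  by_contra hpn
  have hcop : IsCoprime n ((p:ℕ) : ℤ) := by
    rw [Int.isCoprime_iff_gcd_eq_one]
    have : ¬ (p:ℕ) ∣ n.natAbs := fun hd => hpn (Int.natCast_dvd.mpr hd)
    have h2 : Nat.Coprime (p:ℕ) n.natAbs := (Nat.Prime.coprime_iff_not_dvd hp).mpr this
    unfold Int.gcd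
    simpa using h2.symm
  obtain ⟨a, b, hab⟩ := hcop
  have hone : (1 - ζ) ∣ (1 : 𝓞 K) := by
    have h1 : (1 - ζ) ∣ ((a * n + b * ((p:ℕ):ℤ) : ℤ) : 𝓞 K) := by
      push_cast
      exact dvd_add (Dvd.dvd.mul_left h _) (Dvd.dvd.mul_left hpdvd _)
    have h2 : ((a * n + b * ((p:ℕ):ℤ) : ℤ) : 𝓞 K) = 1 := by rw [hab]; push_cast; ring
    rwa [h2] at h1
  have : v.asIdeal = ⊤ := by
    rw [hv, Ideal.span_singleton_eq_top]
    exact isUnit_of_dvd_one hone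
  exact v.isPrime.ne_top this

/-- Suppose `C ∈ K` with `v_π(C) = 0`, `C ≡ 1 + c₀λ^ν mod π^(ν+1)` with `c₀ ≢ 0 mod p`
and `1 ≤ ν ≤ p-2`, and `σ(C) ≡ C^μ mod π^(ν+1)` with `μ ≢ 0 mod p`.  Then
`u^ν ≡ μ mod p`. -/
theorem stmt_7 (p : ℕ+) (hp : (p : ℕ).Prime) (hodd : Odd (p : ℕ))
    (K : Type) [Field K] [NumberField K] [IsCyclotomicExtension {(p : ℕ)} ℚ K]
    (ζ : 𝓞 K) (hζ : IsPrimitiveRoot ζ p)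
    (v : IsDedekindDomain.HeightOneSpectrum (𝓞 K))
    (hv : v.asIdeal = Ideal.span {1 - ζ})
    (u : ℕ) (hu : orderOf (u : ZMod p) = (p : ℕ) - 1)
    (σ : K ≃ₐ[ℚ] K) (hσ : σ (ζ : K) = (ζ : K) ^ u)
    (μ : ℤ) (hμ : ¬ ((p : ℕ) : ℤ) ∣ μ)
    (C : K) (hC0 : v.valuation K C = 1)
    (c₀ : ℤ) (hc₀ : ¬ ((p : ℕ) : ℤ) ∣ c₀)
    (ν : ℕ) (hν1 : 1 ≤ ν) (hν2 : ν ≤ (p : ℕ) - 2)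
    (hC : v.valuation K (C - (1 + (c₀ : K) * ((ζ : K) - 1) ^ ν)) ≤
      ((Multiplicative.ofAdd (-((ν : ℤ) + 1)) : Multiplicative ℤ) : WithZero (Multiplicative ℤ)))
    (hσC : v.valuation K (σ C - C ^ μ) ≤
      ((Multiplicative.ofAdd (-((ν : ℤ) + 1)) : Multiplicative ℤ) : WithZero (Multiplicative ℤ))) :
    (u : ZMod p) ^ ν = (μ : ZMod p) := by
  have hp1 : 1 < (p : ℕ) := hp.one_lt
  -- basic coercion helpers
  have hcoe : ∀ r : 𝓞 K, (r : K) = algebraMap (𝓞 K) K r := fun r => rfl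
  have hle1 : ∀ r : 𝓞 K, v.valuation K ((r : K)) ≤ 1 := fun r => v.valuation_le_one r
  have hint1 : ∀ n : ℤ, v.valuation K ((n : K)) ≤ 1 := by
    intro n
    have : ((n : K)) = algebraMap (𝓞 K) K ((n : 𝓞 K)) := by push_cast; rfl
    rw [this]; exact v.valuation_le_one _
  have hnat1 : ∀ n : ℕ, v.valuation K ((n : K)) ≤ 1 := by
    intro n
    have : ((n : K)) = algebraMap (𝓞 K) K ((n : 𝓞 K)) := by push_cast; rfl
    rw [this]; exact v.valuation_le_one _
  -- value group helpers
  have hcoe_le : ∀ a b : ℤ, ((Multiplicative.ofAdd a : Multiplicative ℤ) : WithZero (Multiplicative ℤ)) ≤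
      ((Multiplicative.ofAdd b : Multiplicative ℤ) : WithZero (Multiplicative ℤ)) ↔ a ≤ b := by
    intro a b; rw [WithZero.coe_le_coe, Multiplicative.ofAdd_le]
  have hcoe_mul : ∀ a b : ℤ, ((Multiplicative.ofAdd a : Multiplicative ℤ) : WithZero (Multiplicative ℤ)) *
      ((Multiplicative.ofAdd b : Multiplicative ℤ) : WithZero (Multiplicative ℤ)) =
      ((Multiplicative.ofAdd (a + b) : Multiplicative ℤ) : WithZero (Multiplicative ℤ)) := by
    intro a b; rw [← WithZero.coe_mul, ← ofAdd_add]
  set t : WithZero (Multiplicative ℤ) :=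
    ((Multiplicative.ofAdd (-((ν : ℤ) + 1)) : Multiplicative ℤ) : WithZero (Multiplicative ℤ)) with ht
  set s : WithZero (Multiplicative ℤ) :=
    ((Multiplicative.ofAdd (-(ν : ℤ)) : Multiplicative ℤ) : WithZero (Multiplicative ℤ)) with hs
  have hts : t ≤ s := (hcoe_le _ _).mpr (by omega)
  have hs1 : s ≤ 1 := by
    rw [hs, ← WithZero.coe_one]
    exact (hcoe_le _ _).mpr (by omega) -- careful: 1 = ofAdd 0
  have ht1 : t ≤ 1 := le_trans hts hs1
  have hss : s * s ≤ t := by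
    rw [hs, ht, hcoe_mul]
    exact (hcoe_le _ _).mpr (by omega)
  -- the uniformizer
  set lam : K := (ζ : K) - 1 with hlam
  have hζne : (1 : 𝓞 K) - ζ ≠ 0 := by
    intro h
    exact (hζ.ne_one hp1) (by linear_combination -h)
  have hvlam : v.valuation K lam = ((Multiplicative.ofAdd (-1 : ℤ) : Multiplicative ℤ) : WithZero (Multiplicative ℤ)) := by
    have h1 : lam = algebraMap (𝓞 K) K (-(1 - ζ)) := by
      rw [hlam]; push_cast; ring
    rw [h1, map_neg, Valuation.map_neg, valuation_of_algebraMap]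
    exact v.intValuation_singleton hζne hv
  have hvlampow : ∀ k : ℕ, v.valuation K (lam ^ k) =
      ((Multiplicative.ofAdd (-(k : ℤ)) : Multiplicative ℤ) : WithZero (Multiplicative ℤ)) := by
    intro k
    rw [map_pow, hvlam, ← WithZero.coe_pow, WithZero.coe_inj, ← ofAdd_nsmul]
    congr 1
    simp
  have hvlamν : v.valuation K (lam ^ ν) = s := hvlampow ν
  have hvlamν1 : v.valuation K (lam ^ (ν+1)) = t := by
    rw [hvlampow (ν+1), ht, show (-((ν:ℤ)+1)) = (-(((ν+1):ℕ):ℤ)) by push_cast; ring]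
  have hu_unit : IsUnit ((u : ℕ) : ZMod p) := by
    apply IsUnit.of_pow_eq_one (n := (p:ℕ) - 1)
    · rw [← hu]; exact pow_orderOf_eq_one _
    · omega
  -- Step A : v (σ C - (1 + c₀ u^ν lam^ν)) ≤ t
  obtain ⟨d, hd⟩ := aux_one_add_pow (ζ - 1) u
  obtain ⟨e, he⟩ := aux_add_pow ((u : 𝓞 K)) ((ζ - 1) * d) ν
  have key1 : (ζ ^ u - 1) ^ ν = (u : 𝓞 K) ^ ν * (ζ - 1) ^ ν + (d * e) * (ζ - 1) ^ (ν + 1) := by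
    have h2 : ζ ^ u - 1 = (ζ - 1) * ((u : 𝓞 K) + (ζ - 1) * d) := by
      have : ζ ^ u = (1 + (ζ - 1)) ^ u := by ring_nf
      rw [this, hd]; ring
    rw [h2, mul_pow, he]; ring
  have key1K : ((ζ : K) ^ u - 1) ^ ν
      = (u : K) ^ ν * lam ^ ν + ((d * e : 𝓞 K) : K) * lam ^ (ν + 1) := by
    have := congrArg (algebraMap (𝓞 K) K) key1
    push_cast at this
    rw [hlam]
    push_cast
    linear_combination this
  have hσlam : σ ((ζ : K) - 1) = (ζ : K) ^ u - 1 := by rw [map_sub, map_one, hσ]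
  have hA : v.valuation K (σ C - (1 + (c₀ : K) * (u : K) ^ ν * lam ^ ν)) ≤ t := by
    have hsplit : σ C - (1 + (c₀ : K) * (u : K) ^ ν * lam ^ ν)
        = σ (C - (1 + (c₀ : K) * lam ^ ν))
          + (c₀ : K) * ((d * e : 𝓞 K) : K) * lam ^ (ν + 1) := by
      rw [map_sub, map_add, map_one, map_mul, map_intCast, map_pow, hlam, hσlam, key1K]
      ring
    rw [hsplit]
    refine le_trans ((v.valuation K).map_add _ _) (max_le ?_ ?_)
    · rw [val_sigma p hp K ζ hζ v hv u hu_unit σ hσ]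
      exact hC
    · calc v.valuation K ((c₀ : K) * ((d * e : 𝓞 K) : K) * lam ^ (ν + 1))
          = v.valuation K ((c₀ : K)) * v.valuation K (((d * e : 𝓞 K) : K)) * v.valuation K (lam ^ (ν+1)) := by
            rw [map_mul, map_mul]
        _ ≤ 1 * 1 * t := by
            rw [hvlamν1]
            exact mul_le_mul' (mul_le_mul' (hint1 c₀) (hle1 _)) le_rfl
        _ = t := by rw [one_mul, one_mul]
  -- Step B : v (C^μ - (1 + μ c₀ lam^ν)) ≤ t
  have hE : v.valuation K (C - (1 + (c₀ : K) * lam ^ ν)) ≤ t := hC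
  have hF : v.valuation K (C - 1) ≤ s := by
    have hsplit : C - 1 = (c₀ : K) * lam ^ ν + (C - (1 + (c₀ : K) * lam ^ ν)) := by ring
    rw [hsplit]
    refine le_trans ((v.valuation K).map_add _ _) (max_le ?_ (le_trans hE hts))
    calc v.valuation K ((c₀ : K) * lam ^ ν) = v.valuation K ((c₀ : K)) * v.valuation K (lam ^ ν) := map_mul _ _ _
      _ ≤ 1 * s := by rw [hvlamν]; exact mul_le_mul' (hint1 c₀) le_rfl
      _ = s := one_mul s
  have hCne : C ≠ 0 := by
    intro h
    rw [h, Valuation.map_zero] at hC0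
    exact zero_ne_one hC0
  have hpow : ∀ m : ℕ, v.valuation K (C ^ m - (1 + (m : K) * (C - 1))) ≤ t := by
    intro m
    induction m with
    | zero => simpa using zero_le'
    | succ m ih =>
      have key : C ^ (m+1) - (1 + ((m+1 : ℕ) : K) * (C - 1))
          = (C ^ m - (1 + (m : K) * (C - 1))) * C + (m : K) * (C - 1) ^ 2 := by
        push_cast; ring
      rw [key]
      refine le_trans ((v.valuation K).map_add _ _) (max_le ?_ ?_)
      · rw [map_mul, hC0, mul_one]; exact ih
      · calc v.valuation K ((m : K) * (C - 1) ^ 2)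
            = v.valuation K ((m : K)) * (v.valuation K (C - 1) * v.valuation K (C - 1)) := by
              rw [map_mul, pow_two, map_mul]
          _ ≤ 1 * (s * s) := mul_le_mul' (hnat1 m) (mul_le_mul' hF hF)
          _ ≤ t := by rw [one_mul]; exact hss
  have hCm : ∀ m : ℕ, v.valuation K (C ^ m - (1 + (m : K) * (c₀ : K) * lam ^ ν)) ≤ t := by
    intro m
    have hsplit : C ^ m - (1 + (m : K) * (c₀ : K) * lam ^ ν)
        = (C ^ m - (1 + (m : K) * (C - 1))) + (m : K) * (C - (1 + (c₀ : K) * lam ^ ν)) := by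
      ring
    rw [hsplit]
    refine le_trans ((v.valuation K).map_add _ _) (max_le (hpow m) ?_)
    calc v.valuation K ((m : K) * (C - (1 + (c₀ : K) * lam ^ ν)))
        = v.valuation K ((m : K)) * v.valuation K (C - (1 + (c₀ : K) * lam ^ ν)) := map_mul _ _ _
      _ ≤ 1 * t := mul_le_mul' (hnat1 m) hE
      _ = t := one_mul t
  have hB : v.valuation K (C ^ μ - (1 + (μ : K) * (c₀ : K) * lam ^ ν)) ≤ t := by
    rcases le_or_gt 0 μ with hm | hm
    · lift μ to ℕ using hm
      rw [zpow_natCast]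
      have : ((μ : ℤ) : K) = (μ : K) := by push_cast; ring
      rw [this]
      exact hCm μ
    · set m : ℕ := (-μ).toNat with hmdef
      have hμm : μ = -(m : ℤ) := by omega
      have hXval : v.valuation K (C ^ m) = 1 := by rw [map_pow, hC0, one_pow]
      have hXne : C ^ m ≠ 0 := pow_ne_zero m hCne
      have hzpow : C ^ μ = (C ^ m)⁻¹ := by
        rw [hμm, zpow_neg, zpow_natCast]
      have hfac : C ^ μ - (1 + (μ : K) * (c₀ : K) * lam ^ ν)
          = (C ^ m)⁻¹ * (1 - C ^ m * (1 + (μ : K) * (c₀ : K) * lam ^ ν)) := by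
        rw [hzpow]
        field_simp
      rw [hfac, map_mul, map_inv₀, hXval, inv_one, one_mul]
      -- 1 - C^m * B = ((1 + m c₀ lam^ν) - C^m) * B + (m c₀ lam^ν)^2 where B = 1 - m c₀ lam^ν
      have hBdef : (1 : K) + (μ : K) * (c₀ : K) * lam ^ ν = 1 - (m : K) * (c₀ : K) * lam ^ ν := by
        rw [hμm]; push_cast; ring
      have hsplit : 1 - C ^ m * (1 + (μ : K) * (c₀ : K) * lam ^ ν)
          = (-(C ^ m - (1 + (m : K) * (c₀ : K) * lam ^ ν))) * (1 + (μ : K) * (c₀ : K) * lam ^ ν)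
            + ((m : K) * (c₀ : K) * lam ^ ν) ^ 2 := by
        rw [hBdef]; push_cast; ring
      rw [hsplit]
      refine le_trans ((v.valuation K).map_add _ _) (max_le ?_ ?_)
      · have hBle : v.valuation K (1 + (μ : K) * (c₀ : K) * lam ^ ν) ≤ 1 := by
          refine le_trans ((v.valuation K).map_add _ _) (max_le (le_of_eq (Valuation.map_one _)) ?_)
          calc v.valuation K ((μ : K) * (c₀ : K) * lam ^ ν)
              = v.valuation K ((μ : K)) * v.valuation K ((c₀ : K)) * v.valuation K (lam ^ ν) := by
                rw [map_mul, map_mul]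
            _ ≤ 1 * 1 * 1 := by
                exact mul_le_mul' (mul_le_mul' (hint1 μ) (hint1 c₀)) (le_trans (le_of_eq hvlamν) hs1)
            _ = 1 := by norm_num
        calc v.valuation K ((-(C ^ m - (1 + (m : K) * (c₀ : K) * lam ^ ν))) * (1 + (μ : K) * (c₀ : K) * lam ^ ν))
            = v.valuation K (C ^ m - (1 + (m : K) * (c₀ : K) * lam ^ ν))
              * v.valuation K (1 + (μ : K) * (c₀ : K) * lam ^ ν) := by
              rw [map_mul, Valuation.map_neg]
          _ ≤ t * 1 := mul_le_mul' (hCm m) hBle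
          _ = t := mul_one t
      · calc v.valuation K (((m : K) * (c₀ : K) * lam ^ ν) ^ 2)
            = (v.valuation K ((m : K)) * v.valuation K ((c₀ : K)) * v.valuation K (lam ^ ν)) ^ 2 := by
              rw [map_pow, map_mul, map_mul]
          _ ≤ (1 * 1 * s) ^ 2 := by
              exact pow_le_pow_left' (mul_le_mul' (mul_le_mul' (hnat1 m) (hint1 c₀)) (le_of_eq hvlamν)) 2
          _ = s * s := by rw [one_mul, one_mul, pow_two]
          _ ≤ t := hss
  -- combine
  have hAB : v.valuation K (((c₀ * ((u : ℤ) ^ ν - μ) : ℤ) : K) * lam ^ ν) ≤ t := by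
    have hsplit : ((c₀ * ((u : ℤ) ^ ν - μ) : ℤ) : K) * lam ^ ν
        = -(σ C - (1 + (c₀ : K) * (u : K) ^ ν * lam ^ ν)) + (σ C - C ^ μ)
          + (C ^ μ - (1 + (μ : K) * (c₀ : K) * lam ^ ν)) := by
      push_cast
      ring
    rw [hsplit]
    refine le_trans ((v.valuation K).map_add _ _) (max_le (le_trans ((v.valuation K).map_add _ _) (max_le ?_ hσC)) hB)
    rw [Valuation.map_neg]
    exact hA
  have hvn : v.valuation K (((c₀ * ((u : ℤ) ^ ν - μ) : ℤ) : K)) ≤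
      ((Multiplicative.ofAdd (-1 : ℤ) : Multiplicative ℤ) : WithZero (Multiplicative ℤ)) := by
    rw [map_mul, hvlamν] at hAB
    have ht' : t = ((Multiplicative.ofAdd (-1 : ℤ) : Multiplicative ℤ) : WithZero (Multiplicative ℤ)) * s := by
      rw [ht, hs, hcoe_mul]
      congr 1
      abel
    rw [ht'] at hAB
    have hspos : (0 : WithZero (Multiplicative ℤ)) < s := by
      rw [hs]; exact WithZero.zero_lt_coe _
    exact le_of_mul_le_mul_right hAB hspos
  have hdvd : (1 - ζ) ∣ ((c₀ * ((u : ℤ) ^ ν - μ) : ℤ) : 𝓞 K) := by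
    have hcast : ((c₀ * ((u : ℤ) ^ ν - μ) : ℤ) : K)
        = algebraMap (𝓞 K) K (((c₀ * ((u : ℤ) ^ ν - μ) : ℤ) : 𝓞 K)) := by push_cast; rfl
    have h1 : v.valuation K (algebraMap (𝓞 K) K (((c₀ * ((u : ℤ) ^ ν - μ) : ℤ) : 𝓞 K))) < 1 := by
      refine lt_of_le_of_lt (hcast ▸ hvn) ?_
      rw [← WithZero.coe_one, WithZero.coe_lt_coe]
      exact Multiplicative.ofAdd_lt.mpr (by norm_num)
    rw [valuation_lt_one_iff_dvd, hv, Ideal.dvd_span_singleton, Ideal.mem_span_singleton] at h1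
    exact h1
  have hpd : ((p : ℕ) : ℤ) ∣ c₀ * ((u : ℤ) ^ ν - μ) :=
    dvd_int_of_dvd p hp K ζ hζ v hv _ hdvd
  have hprime : Prime (((p : ℕ) : ℤ)) := Nat.prime_iff_prime_int.mp hp
  have hfinal : ((p : ℕ) : ℤ) ∣ ((u : ℤ) ^ ν - μ) := (hprime.dvd_mul.mp hpd).resolve_left hc₀
  have := (ZMod.intCast_zmod_eq_zero_iff_dvd ((u : ℤ) ^ ν - μ) p).mpr hfinal
  push_cast at this
  linear_combination this
end

section
/- Let p be an odd prime, ζ a primitive p-th root of unity, u a primitive root mod p, σ(ζ) = ζ^u, π = (1-ζ)O_K, μ ∈ ℤ with μ ≢ 0, 1 mod p. Suppose V = γ + γ₀ζ + γ₁ζ^(u₁) + ... + γ_(p-3)ζ^(u_(p-3)) with γ, γ_i ∈ ℤ and σ(V) ≡ μV mod p·O_K. Then γ ≡ -γ_(p-3)/(μ-1) mod p and γ_k ≡ -(μ^(-1) + μ^(-2) + ... + μ^(-(k+1)))·γ_(p-3) mod p for 0 ≤ k ≤ p-4. -/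
open scoped NumberField

open Finset in
private lemma auxH {R : Type*} [CommRing R] (x : R) :
    ∀ n : ℕ, x * (∑ j ∈ Finset.Icc 1 (n+1), x ^ j) + x = ∑ j ∈ Finset.Icc 1 (n+2), x ^ j := by
  intro n
  induction n with
  | zero =>
    rw [Finset.Icc_self, Finset.sum_singleton, show (2:ℕ) = 1 + 1 from rfl,
      Finset.sum_Icc_succ_top (by omega), Finset.Icc_self, Finset.sum_singleton]
    ring
  | succ n ih =>
    conv_lhs => rw [Finset.sum_Icc_succ_top (show (1:ℕ) ≤ n + 2 by omega)]
    conv_rhs => rw [Finset.sum_Icc_succ_top (show (1:ℕ) ≤ n + 2 + 1 by omega)]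
    rw [← ih]
    ring

private lemma aux_coeffs (p : ℕ+) (hp : (p : ℕ).Prime) (K : Type) [Field K] [NumberField K]
    [IsCyclotomicExtension {(p : ℕ)} ℚ K] (ζ : 𝓞 K) (hζ : IsPrimitiveRoot ζ p) (a : ℕ → ℤ)
    (h : (∑ e ∈ Finset.range ((p:ℕ)-1), (a e : 𝓞 K) * ζ ^ e) ∈ Ideal.span {((p:ℕ) : 𝓞 K)}) :
    ∀ e < (p:ℕ)-1, (a e : ZMod p) = 0 := by
  haveI : Fact ((p:ℕ).Prime) := ⟨hp⟩
  have hζK : IsPrimitiveRoot (algebraMap (𝓞 K) K ζ) p :=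
    hζ.map_of_injective NumberField.RingOfIntegers.coe_injective
  have hgen : hζK.integralPowerBasis.gen = ζ := by
    have h1 := hζK.integralPowerBasis_gen
    exact NumberField.RingOfIntegers.coe_injective (by rw [h1]; rfl)
  have hdim : hζK.integralPowerBasis.dim = (p:ℕ) - 1 := by
    rw [hζK.integralPowerBasis_dim, Nat.totient_prime hp]
  set B := hζK.integralPowerBasis with hBdef
  intro e he
  rw [← hdim] at he
  obtain ⟨w, hw⟩ := Ideal.mem_span_singleton.mp h
  have hsum : (∑ e ∈ Finset.range ((p:ℕ)-1), (a e : 𝓞 K) * ζ ^ e)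
      = ∑ i : Fin B.dim, a i • B.basis i := by
    rw [← hdim, ← Fin.sum_univ_eq_sum_range (fun e => (a e : 𝓞 K) * ζ ^ e) B.dim]
    refine Finset.sum_congr rfl fun i _ => ?_
    rw [PowerBasis.coe_basis, hgen, zsmul_eq_mul]
  have h2 : (a e : ℤ) = ((p:ℕ):ℤ) * (B.basis.repr w ⟨e, he⟩) := by
    have h3 : B.basis.repr (∑ i : Fin B.dim, ((fun i : Fin B.dim => a (i:ℕ)) i) • B.basis i)
        ⟨e, he⟩ = a e := by
      rw [B.basis.repr_sum_self]
    have h4 : B.basis.repr (∑ i : Fin B.dim, a (i:ℕ) • B.basis i) ⟨e, he⟩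
        = ((p:ℕ):ℤ) * (B.basis.repr w ⟨e, he⟩) := by
      rw [← hsum, hw]
      have h5 : ((p:ℕ):𝓞 K) * w = ((p:ℕ):ℤ) • w := by
        rw [zsmul_eq_mul]; push_cast; ring
      rw [h5, map_smul]
      simp
    rw [← h3, h4]
  have h6 : ((a e : ℤ) : ZMod p) = ((((p:ℕ):ℤ) * (B.basis.repr w ⟨e, he⟩) : ℤ) : ZMod p) := by
    rw [← h2]
  rw [h6]
  push_cast
  simp [ZMod.natCast_self]

private lemma aux_congr (p : ℕ+) (hp : (p : ℕ).Prime) (K : Type) [Field K] [NumberField K]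
    [IsCyclotomicExtension {(p : ℕ)} ℚ K] (ζ : 𝓞 K) (hζ : IsPrimitiveRoot ζ p) (b : ℕ → ℤ)
    (h : (∑ e ∈ Finset.range (p:ℕ), (b e : 𝓞 K) * ζ ^ e) ∈ Ideal.span {((p:ℕ) : 𝓞 K)}) :
    ∀ e < (p:ℕ), ∀ e' < (p:ℕ), (b e : ZMod p) = (b e' : ZMod p) := by
  have h1 : 1 < (p:ℕ) := hp.one_lt
  have hgeom : ∑ e ∈ Finset.range (p:ℕ), ζ ^ e = 0 := hζ.geom_sum_eq_zero h1
  have hzp1 : (ζ ^ ((p:ℕ)-1) : 𝓞 K) = -∑ e ∈ Finset.range ((p:ℕ)-1), ζ ^ e := by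
    rw [show (p:ℕ) = ((p:ℕ)-1)+1 by omega, Finset.sum_range_succ] at hgeom
    linear_combination hgeom
  have key : (∑ e ∈ Finset.range ((p:ℕ)-1), ((b e - b ((p:ℕ)-1) : ℤ) : 𝓞 K) * ζ ^ e)
      ∈ Ideal.span {((p:ℕ) : 𝓞 K)} := by
    have heq : (∑ e ∈ Finset.range ((p:ℕ)-1), ((b e - b ((p:ℕ)-1) : ℤ) : 𝓞 K) * ζ ^ e)
        = ∑ e ∈ Finset.range (p:ℕ), (b e : 𝓞 K) * ζ ^ e := by
      conv_rhs => rw [show (p:ℕ) = ((p:ℕ)-1)+1 by omega, Finset.sum_range_succ, hzp1]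
      rw [mul_neg, Finset.mul_sum, ← sub_eq_add_neg, ← Finset.sum_sub_distrib]
      refine Finset.sum_congr rfl fun e _ => ?_
      push_cast
      ring
    rw [heq]
    exact h
  have h2 := aux_coeffs p hp K ζ hζ (fun e => b e - b ((p:ℕ)-1)) key
  have hh : ∀ x < (p:ℕ), (b x : ZMod p) = (b ((p:ℕ)-1) : ZMod p) := by
    intro x hx
    by_cases hx1 : x = (p:ℕ)-1
    · rw [hx1]
    · have h3 := h2 x (by omega)
      push_cast at h3
      exact sub_eq_zero.mp h3
  intro e he e' he'
  rw [hh e he, hh e' he']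

/-- Suppose `V = γ + γ₀ζ + γ₁ζ^(u₁) + ⋯ + γ_(p-3)ζ^(u_(p-3))` with integer coefficients
and `σ(V) ≡ μV mod p·O_K`, where `μ ≢ 0, 1 mod p`.  Then `γ ≡ -γ_(p-3)/(μ-1) mod p` and
`γ_k ≡ -(μ^(-1) + ⋯ + μ^(-(k+1)))·γ_(p-3) mod p` for `0 ≤ k ≤ p-4`. -/
theorem stmt_10 (p : ℕ+) (hp : (p : ℕ).Prime) (hodd : Odd (p : ℕ))
    (K : Type) [Field K] [NumberField K] [IsCyclotomicExtension {(p : ℕ)} ℚ K]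
    (ζ : 𝓞 K) (hζ : IsPrimitiveRoot ζ p)
    (u : ℕ) (hu : orderOf (u : ZMod p) = (p : ℕ) - 1)
    (σ : 𝓞 K ≃+* 𝓞 K) (hσ : σ ζ = ζ ^ u)
    (μ : ℤ) (hμ0 : (μ : ZMod p) ≠ 0) (hμ1 : (μ : ZMod p) ≠ 1)
    (γ : ℤ) (g : ℕ → ℤ) (V : 𝓞 K)
    (hV : V = (γ : 𝓞 K) + ∑ i ∈ Finset.range ((p : ℕ) - 2), (g i : 𝓞 K) * ζ ^ (u ^ i % (p : ℕ)))
    (hσV : σ V - (μ : 𝓞 K) * V ∈ Ideal.span {((p : ℕ) : 𝓞 K)}) :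
    (γ : ZMod p) = -(g ((p : ℕ) - 3) : ZMod p) * ((μ : ZMod p) - 1)⁻¹ ∧
      ∀ k ≤ (p : ℕ) - 4,
        (g k : ZMod p) =
          -(∑ j ∈ Finset.Icc 1 (k + 1), ((μ : ZMod p)⁻¹) ^ j) * (g ((p : ℕ) - 3) : ZMod p) := by
  classical
  haveI : Fact ((p:ℕ).Prime) := ⟨hp⟩
  have hP3 : 3 ≤ (p:ℕ) := by
    rcases hodd with ⟨m, hm⟩
    have := hp.two_le
    omega
  set P := (p:ℕ) with hPdef
  set t : ℕ → ℕ := fun i => u ^ i % P with htdef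
  have hP0 : 0 < P := by omega
  have hord : orderOf ζ = P := hζ.eq_orderOf.symm
  have hu0 : (u : ZMod p) ≠ 0 := by
    intro h0
    have h1 : (u : ZMod p) ^ (P - 1) = 1 := hu ▸ pow_orderOf_eq_one _
    rw [h0, zero_pow (by omega)] at h1
    exact one_ne_zero h1.symm
  have htlt : ∀ i, t i < P := fun i => Nat.mod_lt _ hP0
  have htne : ∀ i, t i ≠ 0 := by
    intro i h0
    have h1 : ((t i : ℕ) : ZMod p) = 0 := by rw [h0]; simp
    rw [show t i = u ^ i % P from rfl, ZMod.natCast_mod, Nat.cast_pow] at h1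
    exact pow_ne_zero i hu0 h1
  have htinj : ∀ i < P - 1, ∀ j < P - 1, t i = t j → i = j := by
    intro i hi j hj hij
    have h1 : (u : ZMod p) ^ i = (u : ZMod p) ^ j := by
      have e1 : ((u ^ i % P : ℕ) : ZMod p) = ((u ^ j % P : ℕ) : ZMod p) := by
        rw [show u ^ i % P = t i from rfl, show u ^ j % P = t j from rfl, hij]
      rwa [ZMod.natCast_mod, ZMod.natCast_mod, Nat.cast_pow, Nat.cast_pow] at e1
    exact pow_injOn_Iio_orderOf (by rw [hu]; exact hi) (by rw [hu]; exact hj) h1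
  have hζpow : ∀ m : ℕ, ζ ^ (m % P) = ζ ^ m := by
    intro m
    conv_rhs => rw [← pow_mod_orderOf ζ m]
    rw [hord]
  have hts : ∀ i, σ (ζ ^ t i) = ζ ^ t (i + 1) := by
    intro i
    rw [map_pow, hσ, ← pow_mul]
    have h1 : (u * (u ^ i % P)) % P = u ^ (i + 1) % P := by
      have h2 := (Nat.mod_modEq (u ^ i) P).mul_left u
      rw [show u * u ^ i = u ^ (i+1) by ring] at h2
      exact h2
    calc ζ ^ (u * (u ^ i % P)) = ζ ^ ((u * (u ^ i % P)) % P) := (hζpow _).symm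
      _ = ζ ^ (u ^ (i + 1) % P) := by rw [h1]
  have hσV2 : σ V = (γ : 𝓞 K) + ∑ i ∈ Finset.range (P - 2), (g i : 𝓞 K) * ζ ^ (t (i + 1)) := by
    rw [hV, map_add, map_sum, map_intCast]
    congr 1
    refine Finset.sum_congr rfl fun i _ => ?_
    rw [map_mul, map_intCast, hts]
  set b : ℕ → ℤ := fun e =>
    (if e = 0 then (1 - μ) * γ else 0)
    + (∑ i ∈ Finset.range (P - 2), if t (i + 1) = e then g i else 0)
    - (∑ i ∈ Finset.range (P - 2), if t i = e then μ * g i else 0) with hbdef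
  have hmain : σ V - (μ : 𝓞 K) * V = ∑ e ∈ Finset.range P, (b e : 𝓞 K) * ζ ^ e := by
    have expand : ∀ e, ((b e : ℤ) : 𝓞 K) * ζ ^ e =
        (if e = 0 then ((1 - μ : ℤ) : 𝓞 K) * (γ : 𝓞 K) * ζ ^ e else 0)
        + (∑ i ∈ Finset.range (P - 2), if t (i + 1) = e then (g i : 𝓞 K) * ζ ^ e else 0)
        - (∑ i ∈ Finset.range (P - 2), if t i = e then (μ : 𝓞 K) * (g i : 𝓞 K) * ζ ^ e
            else 0) := by
      intro e
      simp only [hbdef]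
      push_cast [apply_ite (fun z : ℤ => (z : 𝓞 K))]
      rw [sub_mul, add_mul, Finset.sum_mul, Finset.sum_mul]
      congr 1
      · congr 1
        · split <;> ring
        · refine Finset.sum_congr rfl fun i _ => ?_
          split <;> ring
      · refine Finset.sum_congr rfl fun i _ => ?_
        split <;> ring
    rw [Finset.sum_congr rfl (fun e _ => expand e)]
    simp only [Finset.sum_sub_distrib, Finset.sum_add_distrib]
    have e1 : (∑ e ∈ Finset.range P,
        if e = 0 then ((1 - μ : ℤ) : 𝓞 K) * (γ : 𝓞 K) * ζ ^ e else 0)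
        = ((1 - μ : ℤ) : 𝓞 K) * (γ : 𝓞 K) := by
      rw [Finset.sum_ite_eq' (Finset.range P) 0
        (fun e => ((1 - μ : ℤ) : 𝓞 K) * (γ : 𝓞 K) * ζ ^ e)]
      simp [Finset.mem_range, hP0]
    have e2 : (∑ e ∈ Finset.range P, ∑ i ∈ Finset.range (P - 2),
        if t (i + 1) = e then (g i : 𝓞 K) * ζ ^ e else 0)
        = ∑ i ∈ Finset.range (P - 2), (g i : 𝓞 K) * ζ ^ (t (i + 1)) := by
      rw [Finset.sum_comm]
      refine Finset.sum_congr rfl fun i _ => ?_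
      rw [Finset.sum_ite_eq (Finset.range P) (t (i + 1)) (fun e => (g i : 𝓞 K) * ζ ^ e)]
      simp [Finset.mem_range, htlt]
    have e3 : (∑ e ∈ Finset.range P, ∑ i ∈ Finset.range (P - 2),
        if t i = e then (μ : 𝓞 K) * (g i : 𝓞 K) * ζ ^ e else 0)
        = ∑ i ∈ Finset.range (P - 2), (μ : 𝓞 K) * (g i : 𝓞 K) * ζ ^ (t i) := by
      rw [Finset.sum_comm]
      refine Finset.sum_congr rfl fun i _ => ?_
      rw [Finset.sum_ite_eq (Finset.range P) (t i)
        (fun e => (μ : 𝓞 K) * (g i : 𝓞 K) * ζ ^ e)]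
      simp [Finset.mem_range, htlt]
    rw [e1, e2, e3, hσV2, hV]
    push_cast
    rw [mul_add, Finset.mul_sum]
    rw [Finset.sum_congr rfl (fun i (_ : i ∈ Finset.range (P - 2)) =>
      show (μ : 𝓞 K) * ((g i : 𝓞 K) * ζ ^ (u ^ i % P)) = (μ : 𝓞 K) * (g i : 𝓞 K) * ζ ^ (t i)
      from by rw [show t i = u ^ i % P from rfl]; ring)]
    ring
  have hcong : ∀ e < P, ∀ e' < P, (b e : ZMod p) = (b e' : ZMod p) := by
    refine aux_congr p hp K ζ hζ b ?_
    rw [← hmain]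
    exact hσV
  have hb0 : b 0 = (1 - μ) * γ := by
    simp only [hbdef]
    rw [Finset.sum_eq_zero (fun i _ => if_neg (htne (i + 1))),
      Finset.sum_eq_zero (fun i _ => if_neg (htne i))]
    simp
  have hblast : b (t (P - 2)) = g (P - 3) := by
    simp only [hbdef]
    rw [if_neg (htne (P - 2))]
    have s1 : (∑ i ∈ Finset.range (P - 2), if t (i + 1) = t (P - 2) then g i else 0)
        = g (P - 3) := by
      rw [Finset.sum_eq_single_of_mem (P - 3) (Finset.mem_range.mpr (by omega))]
      · rw [if_pos (by rw [show P - 3 + 1 = P - 2 by omega])]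
      · intro i hi hne
        rw [if_neg]
        intro hcon
        have hi' := Finset.mem_range.mp hi
        have := htinj (i + 1) (by omega) (P - 2) (by omega) hcon
        omega
    have s2 : (∑ i ∈ Finset.range (P - 2), if t i = t (P - 2) then μ * g i else 0) = 0 := by
      refine Finset.sum_eq_zero fun i hi => ?_
      rw [if_neg]
      intro hcon
      have hi' := Finset.mem_range.mp hi
      have := htinj i (by omega) (P - 2) (by omega) hcon
      omega
    rw [s1, s2]
    ring
  have hbk : ∀ k, k < P - 2 → b (t k) = (if k = 0 then 0 else g (k - 1)) - μ * g k := by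
    intro k hk
    simp only [hbdef]
    rw [if_neg (htne k)]
    have s2 : (∑ i ∈ Finset.range (P - 2), if t i = t k then μ * g i else 0) = μ * g k := by
      rw [Finset.sum_eq_single_of_mem k (Finset.mem_range.mpr hk)]
      · rw [if_pos rfl]
      · intro i hi hne
        rw [if_neg]
        intro hcon
        have hi' := Finset.mem_range.mp hi
        exact hne (htinj i (by omega) k (by omega) hcon)
    have s1 : (∑ i ∈ Finset.range (P - 2), if t (i + 1) = t k then (g i : ℤ) else 0)
        = if k = 0 then 0 else g (k - 1) := by
      by_cases hk0 : k = 0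
      · subst hk0
        rw [if_pos rfl]
        refine Finset.sum_eq_zero fun i hi => ?_
        rw [if_neg]
        intro hcon
        have hi' := Finset.mem_range.mp hi
        have := htinj (i + 1) (by omega) 0 (by omega) hcon
        omega
      · rw [if_neg hk0]
        rw [Finset.sum_eq_single_of_mem (k - 1) (Finset.mem_range.mpr (by omega))]
        · rw [if_pos (by rw [show k - 1 + 1 = k by omega])]
        · intro i hi hne
          rw [if_neg]
          intro hcon
          have hi' := Finset.mem_range.mp hi
          have := htinj (i + 1) (by omega) k (by omega) hcon
          omega
    rw [s1, s2]
    ring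
  have hm1 : (μ : ZMod p) - 1 ≠ 0 := sub_ne_zero.mpr hμ1
  have hminv : (μ : ZMod p)⁻¹ * (μ : ZMod p) = 1 := inv_mul_cancel₀ hμ0
  have hrel0 : (1 - (μ : ZMod p)) * (γ : ZMod p) = (g (P - 3) : ZMod p) := by
    have h := hcong 0 hP0 (t (P - 2)) (htlt _)
    rw [hb0, hblast] at h
    push_cast at h
    linear_combination h
  have hrel_base : -((μ : ZMod p) * (g 0 : ZMod p)) = (g (P - 3) : ZMod p) := by
    have h := hcong (t 0) (htlt _) (t (P - 2)) (htlt _)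
    rw [hbk 0 (by omega), hblast] at h
    rw [if_pos rfl] at h
    push_cast at h
    linear_combination h
  have hrel_step : ∀ n, n + 1 < P - 2 →
      (g n : ZMod p) - (μ : ZMod p) * (g (n + 1) : ZMod p) = (g (P - 3) : ZMod p) := by
    intro n hn
    have h := hcong (t (n + 1)) (htlt _) (t (P - 2)) (htlt _)
    rw [hbk (n + 1) hn, hblast] at h
    rw [if_neg (Nat.succ_ne_zero n)] at h
    rw [show n + 1 - 1 = n from rfl] at h
    push_cast at h
    linear_combination h
  constructor
  · field_simp
    linear_combination -hrel0
  · intro k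
    induction k with
    | zero =>
      intro _
      rw [Finset.Icc_self, Finset.sum_singleton, pow_one]
      linear_combination (-((μ : ZMod p)⁻¹)) * hrel_base - (g 0 : ZMod p) * hminv
    | succ n ih =>
      intro hn1
      have hih := ih (by omega)
      have hstep := hrel_step n (by omega)
      rw [← auxH ((μ : ZMod p)⁻¹) n]
      linear_combination (-((μ : ZMod p)⁻¹)) * hstep + ((μ : ZMod p)⁻¹) * hih
        - (g (n + 1) : ZMod p) * hminv
end

section
/- Let p be an odd prime, K = ℚ(ζ) the p-th cyclotomic field, π = (1-ζ)O_K. Every unit η of the ring of integers O_{K⁺} of the maximal real subfield K⁺ is semi-primary: there exists c ∈ ℤ with c ≢ 0 mod p such that η ≡ c mod π². -/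
open scoped NumberField

/-- In a quotient ring of prime cardinality `p`, every element is congruent to an integer. -/
lemma aux_exists_int_residue {R : Type*} [CommRing R] (I : Ideal R) (p : ℕ) (hp : p.Prime)
    (hcard : Nat.card (R ⧸ I) = p) (x : R) : ∃ n : ℤ, x - (n : R) ∈ I := by
  have hfin : Finite (R ⧸ I) := Nat.finite_of_card_ne_zero (by rw [hcard]; exact hp.pos.ne')
  have h1 : (1 : R ⧸ I) ≠ 0 := by
    intro h
    have hs : Subsingleton (R ⧸ I) := subsingleton_iff_zero_eq_one.mp h.symm
    have h2 := Finite.card_le_one_iff_subsingleton.mpr hs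
    have h3 := hp.two_le
    omega
  have hord : addOrderOf (1 : R ⧸ I) = p := by
    have hdvd : addOrderOf (1 : R ⧸ I) ∣ p := hcard ▸ addOrderOf_dvd_natCard _
    rcases hp.eq_one_or_self_of_dvd _ hdvd with h | h
    · exact absurd (AddMonoid.addOrderOf_eq_one_iff.mp h) h1
    · exact h
  have htop : AddSubgroup.zmultiples (1 : R ⧸ I) = ⊤ := by
    apply AddSubgroup.eq_top_of_card_eq
    rw [Nat.card_zmultiples, hord, hcard]
  have hx : Ideal.Quotient.mk I x ∈ AddSubgroup.zmultiples (1 : R ⧸ I) := by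
    rw [htop]; trivial
  obtain ⟨n, hn⟩ := AddSubgroup.mem_zmultiples_iff.mp hx
  refine ⟨n, ?_⟩
  have : Ideal.Quotient.mk I (x - (n : R)) = 0 := by
    rw [map_sub, map_intCast, ← hn, zsmul_one, sub_self]
  exact Ideal.Quotient.eq_zero_iff_mem.mp this

/-- Every unit `η` of the ring of integers of the maximal real subfield `K⁺` (realized
here as a unit of `O_K` fixed by complex conjugation) is semi-primary: `η ≡ c mod π²`
for some integer `c` coprime to `p`. -/
theorem stmt_13 (p : ℕ+) (hp : (p : ℕ).Prime) (hodd : Odd (p : ℕ))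
    (K : Type) [Field K] [NumberField K] [IsCyclotomicExtension {(p : ℕ)} ℚ K]
    (ζ : 𝓞 K) (hζ : IsPrimitiveRoot ζ p)
    (conj : 𝓞 K ≃+* 𝓞 K) (hconj : conj ζ = ζ ^ ((p : ℕ) - 1))
    (η : 𝓞 K) (hunit : IsUnit η) (hreal : conj η = η) :
    ∃ c : ℤ, ¬ ((p : ℕ) : ℤ) ∣ c ∧
      η - (c : 𝓞 K) ∈ (Ideal.span {1 - ζ} : Ideal (𝓞 K)) ^ 2 := by
  have hp2 : p ≠ 2 := by
    intro h
    rw [h] at hodd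
    simp [Nat.odd_iff] at hodd
  -- the primitive root in `K`
  have hζK : IsPrimitiveRoot ((algebraMap (𝓞 K) K) ζ) p :=
    hζ.map_of_injective NumberField.RingOfIntegers.coe_injective
  have htoInt : hζK.toInteger = ζ := Subtype.ext rfl
  haveI : Fact (Nat.Prime (p : ℕ)) := ⟨hp⟩
  set lam : 𝓞 K := ζ - 1 with hlam
  have hprime : Prime lam := by
    have := hζK.zeta_sub_one_prime'
    rwa [htoInt] at this
  have hnorm : Algebra.norm ℤ lam = p := by
    have := hζK.norm_toInteger_sub_one_of_prime_ne_two' (fun h => hp2 (PNat.eq h))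
    rwa [htoInt] at this
  -- divisibility by `lam` of integers is divisibility by `p`
  have hdvdint : ∀ y : ℤ, lam ∣ (y : 𝓞 K) ↔ ((p : ℕ) : ℤ) ∣ y := by
    intro y
    have hprimen : Prime (Algebra.norm ℤ lam) := by
      rw [hnorm]; exact_mod_cast Nat.prime_iff_prime_int.mp hp
    rw [← Ideal.norm_dvd_iff hprimen, hnorm]
  -- cardinality of the residue ring
  have hcard : Nat.card (𝓞 K ⧸ Ideal.span {lam}) = (p : ℕ) := by
    have h1k : 1 < p := by
      have := hp.two_le
      exact_mod_cast this
    have := hζK.card_quotient_toInteger_sub_one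
    rw [htoInt] at this
    rw [this, hnorm]
    simp
  have residue : ∀ x : 𝓞 K, ∃ n : ℤ, lam ∣ (x - (n : 𝓞 K)) := by
    intro x
    obtain ⟨n, hn⟩ := aux_exists_int_residue (Ideal.span {lam}) p hp hcard x
    exact ⟨n, Ideal.mem_span_singleton.mp hn⟩
  -- ζ ^ p = 1
  have hζp : ζ ^ (p : ℕ) = 1 := hζ.pow_eq_one
  have hzmul : ζ ^ ((p : ℕ) - 1) * ζ = 1 := by
    rw [← pow_succ, Nat.sub_add_cancel hp.one_le, hζp]
  -- conj lam = -ζ^(p-1) * lam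
  have hconjlam : conj lam = -(ζ ^ ((p : ℕ) - 1)) * lam := by
    rw [hlam, map_sub, hconj, map_one]
    linear_combination hzmul
  obtain ⟨c, u, hu⟩ := residue η
  obtain ⟨d, w, hw⟩ := residue u
  -- η - c = d*lam + lam^2*w'
  have hu' : u = (d : 𝓞 K) + lam * w := by linear_combination hw
  have hηc : η - (c : 𝓞 K) = (d : 𝓞 K) * lam + lam ^ 2 * w := by
    rw [hu] ; rw [hu']; ring
  -- apply conj
  have hconjeq : η - (c : 𝓞 K) = conj lam * ((d : 𝓞 K) + conj lam * conj w) := by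
    have := congrArg conj hηc
    rw [map_sub, hreal, map_intCast, map_add, map_mul, map_mul, map_intCast, map_pow] at this
    rw [this]; ring
  -- subtract
  have hkey : lam ^ 2 ∣ (d : 𝓞 K) * lam * (1 + ζ ^ ((p : ℕ) - 1)) := by
    refine ⟨(ζ ^ ((p : ℕ) - 1)) ^ 2 * conj w - w, ?_⟩
    have h1 : (d : 𝓞 K) * lam + lam ^ 2 * w =
        (-(ζ ^ ((p : ℕ) - 1)) * lam) * ((d : 𝓞 K) + (-(ζ ^ ((p : ℕ) - 1)) * lam) * conj w) := by
      rw [← hηc, hconjeq, hconjlam]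
    linear_combination h1
  -- lam does not divide 1 + ζ^(p-1)
  have hlam2 : ¬ lam ∣ (1 + ζ ^ ((p : ℕ) - 1)) := by
    intro h
    have h2 : lam ∣ ((2 : ℤ) : 𝓞 K) := by
      have hd1 : lam ∣ (ζ ^ ((p : ℕ) - 1) - 1) := by
        refine ⟨-(ζ ^ ((p : ℕ) - 1)), ?_⟩
        linear_combination hzmul
      have h2' := dvd_sub h hd1
      have heq : (1 + ζ ^ ((p : ℕ) - 1)) - (ζ ^ ((p : ℕ) - 1) - 1) = ((2 : ℤ) : 𝓞 K) := by
        push_cast; ring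
      rwa [heq] at h2'
    rw [hdvdint 2] at h2
    have hpd : (p : ℕ) ∣ 2 := by exact_mod_cast h2
    have : (p : ℕ) = 2 := (Nat.prime_dvd_prime_iff_eq hp Nat.prime_two).mp hpd
    exact hp2 (by exact_mod_cast this)
  -- conclude lam ∣ d
  have hld : lam ∣ (d : 𝓞 K) := by
    have hcancel : lam ∣ (d : 𝓞 K) * (1 + ζ ^ ((p : ℕ) - 1)) := by
      obtain ⟨t, ht⟩ := hkey
      refine ⟨t, ?_⟩
      have hne : lam ≠ 0 := hprime.ne_zero
      have : lam * ((d : 𝓞 K) * (1 + ζ ^ ((p : ℕ) - 1))) = lam * (lam * t) := by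
        linear_combination ht
      exact mul_left_cancel₀ hne this
    rcases hprime.dvd_mul.mp hcancel with h | h
    · exact h
    · exact absurd h hlam2
  -- final divisibility
  have hfinal : lam ^ 2 ∣ η - (c : 𝓞 K) := by
    rw [hηc]
    obtain ⟨t, ht⟩ := hld
    exact ⟨t + w, by rw [ht]; ring⟩
  refine ⟨c, ?_, ?_⟩
  · intro hpc
    have hlc : lam ∣ ((c : ℤ) : 𝓞 K) := (hdvdint c).mpr hpc
    have : lam ∣ η := by
      have := dvd_add (dvd_trans (dvd_pow_self lam (by norm_num)) hfinal) hlc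
      simpa using this
    exact hprime.not_unit (isUnit_of_dvd_unit this hunit)
  · rw [Ideal.span_singleton_pow, Ideal.mem_span_singleton]
    have : (1 - ζ) ^ 2 = lam ^ 2 := by rw [hlam]; ring
    rw [this]
    exact hfinal
end

section
/- Let p be an odd prime, K = ℚ(ζ) the p-th cyclotomic field, π = (1-ζ)O_K. If β ∈ O_K with β ≢ 0 mod π, then there exists a natural number w with 0 ≤ w ≤ p-1 such that ζ^w·β is semi-primary, i.e., ζ^w·β ≡ c mod π² for some c ∈ ℤ coprime to p. -/
open scoped NumberField

/-- If `β ∈ O_K` with `β ≢ 0 mod π`, then there is a natural number `w ≤ p-1` such that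
`ζ^w·β` is semi-primary: `ζ^w·β ≡ c mod π²` for some integer `c` coprime to `p`. -/
theorem stmt_15 (p : ℕ+) (hp : (p : ℕ).Prime) (hodd : Odd (p : ℕ))
    (K : Type) [Field K] [NumberField K] [IsCyclotomicExtension {(p : ℕ)} ℚ K]
    (ζ : 𝓞 K) (hζ : IsPrimitiveRoot ζ p)
    (β : 𝓞 K) (hβ : β ∉ (Ideal.span {1 - ζ} : Ideal (𝓞 K))) :
    ∃ w : ℕ, w ≤ (p : ℕ) - 1 ∧ ∃ c : ℤ, ¬ ((p : ℕ) : ℤ) ∣ c ∧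
      ζ ^ w * β - (c : 𝓞 K) ∈ (Ideal.span {1 - ζ} : Ideal (𝓞 K)) ^ 2 := by
  have hfact : Fact (p : ℕ).Prime := ⟨hp⟩
  set u : 𝓞 K := 1 - ζ with hu
  -- ζ as element of K
  have hζK : IsPrimitiveRoot ((algebraMap (𝓞 K) K) ζ) p :=
    hζ.map_of_injective NumberField.RingOfIntegers.coe_injective
  have htoInt : hζK.toInteger = ζ := rfl
  -- u divides p
  have hup : u ∣ ((p : ℕ) : 𝓞 K) := by
    have h := hζK.toInteger_sub_one_dvd_prime'
    rw [htoInt] at h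
    have h2 : u ∣ ((p : ℕ+) : 𝓞 K) := by
      have hneg : u = -(ζ - 1) := by rw [hu]; ring
      rw [hneg, neg_dvd]; exact h
    simpa using h2
  -- every element of 𝓞 K is congruent to an integer mod u
  have A : ∀ x : 𝓞 K, ∃ n : ℤ, u ∣ x - (n : 𝓞 K) := by
    intro x
    obtain ⟨f, hf⟩ := hζK.integralPowerBasis.exists_eq_aeval' x
    refine ⟨f.eval 1, ?_⟩
    have hgen : hζK.integralPowerBasis.gen = ζ := by
      rw [hζK.integralPowerBasis_gen, htoInt]
    rw [hf, hgen]
    have h1 : (Polynomial.aeval ζ) f = (f.map (algebraMap ℤ (𝓞 K))).eval ζ := by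
      rw [Polynomial.aeval_def, Polynomial.eval_map]
    have h2 : ((f.eval 1 : ℤ) : 𝓞 K) = (f.map (algebraMap ℤ (𝓞 K))).eval 1 := by
      rw [Polynomial.eval_map, Polynomial.eval₂_at_one]; rfl
    rw [h1, h2]
    have := Polynomial.sub_dvd_eval_sub ζ 1 (f.map (algebraMap ℤ (𝓞 K)))
    have huz : u = -(ζ - 1) := by rw [hu]; ring
    rw [huz]
    exact (neg_dvd).2 this
  -- decompose β ≡ c₀ + c₁ u mod u²
  obtain ⟨c₀, hc₀⟩ := A β
  obtain ⟨y, hy⟩ := hc₀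
  obtain ⟨c₁, hc₁⟩ := A y
  have hdec : u ^ 2 ∣ β - (c₀ : 𝓞 K) - (c₁ : 𝓞 K) * u := by
    obtain ⟨z, hz⟩ := hc₁
    refine ⟨z, ?_⟩
    have : β - (c₀ : 𝓞 K) - (c₁ : 𝓞 K) * u = u * (y - (c₁ : 𝓞 K)) := by
      linear_combination hy
    rw [this, hz]; ring
  -- p does not divide c₀
  have hpc₀ : ¬ ((p : ℕ) : ℤ) ∣ c₀ := by
    intro ⟨m, hm⟩
    apply hβ
    rw [Ideal.mem_span_singleton]
    have : u ∣ (c₀ : 𝓞 K) := by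
      have : (c₀ : 𝓞 K) = ((p : ℕ) : 𝓞 K) * (m : 𝓞 K) := by
        rw [hm]; push_cast; ring
      rw [this]
      exact hup.mul_right _
    have h2 := dvd_add this ⟨y, hy⟩
    simpa using h2
  -- congruence for powers of ζ
  have hz : ∀ w : ℕ, u ^ 2 ∣ ζ ^ w - (1 - (w : 𝓞 K) * u) := by
    intro w
    induction w with
    | zero => simp
    | succ w ih =>
      have key : ζ ^ (w + 1) - (1 - ((w + 1 : ℕ) : 𝓞 K) * u) =
          ζ * (ζ ^ w - (1 - (w : 𝓞 K) * u)) + (w : 𝓞 K) * u ^ 2 := by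
        have hζu : ζ = 1 - u := by rw [hu]; ring
        push_cast
        rw [hζu]; ring
      rw [key]
      exact dvd_add (ih.mul_left ζ) (Dvd.intro_left _ rfl)
  -- choose w
  have hc₀ne : ((c₀ : ℤ) : ZMod (p : ℕ)) ≠ 0 := by
    rw [Ne, ZMod.intCast_zmod_eq_zero_iff_dvd]
    exact hpc₀
  set a : ZMod (p : ℕ) := ((c₁ : ℤ) : ZMod (p : ℕ)) * ((c₀ : ℤ) : ZMod (p : ℕ))⁻¹ with ha
  refine ⟨a.val, Nat.le_sub_one_of_lt (ZMod.val_lt a), c₀, hpc₀, ?_⟩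
  have hwdvd : ((p : ℕ) : ℤ) ∣ c₁ - (a.val : ℤ) * c₀ := by
    rw [← ZMod.intCast_zmod_eq_zero_iff_dvd]
    push_cast
    rw [ZMod.natCast_val, ZMod.cast_id, ha, mul_assoc,
      inv_mul_cancel₀ hc₀ne, mul_one, sub_self]
  -- u ∣ (c₁ - w c₀ : 𝓞 K), in fact p ∣ it
  obtain ⟨m, hm⟩ := hwdvd
  have hterm : u ^ 2 ∣ ((c₁ : 𝓞 K) - (a.val : 𝓞 K) * (c₀ : 𝓞 K)) * u := by
    have h1 : (c₁ : 𝓞 K) - (a.val : 𝓞 K) * (c₀ : 𝓞 K) = ((p : ℕ) : 𝓞 K) * (m : 𝓞 K) := by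
      have := congrArg (fun n : ℤ => (n : 𝓞 K)) hm
      push_cast at this ⊢
      linear_combination this
    rw [h1]
    obtain ⟨k, hk⟩ := hup
    refine ⟨k * (m : 𝓞 K), ?_⟩
    rw [hk]; ring
  -- final computation
  rw [sq, Ideal.span_singleton_mul_span_singleton, Ideal.mem_span_singleton, ← sq]
  have key : ζ ^ a.val * β - (c₀ : 𝓞 K) =
      (ζ ^ a.val - (1 - (a.val : 𝓞 K) * u)) * β
      + (1 - (a.val : 𝓞 K) * u) * (β - (c₀ : 𝓞 K) - (c₁ : 𝓞 K) * u)
      + ((c₁ : 𝓞 K) - (a.val : 𝓞 K) * (c₀ : 𝓞 K)) * u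
      - (a.val : 𝓞 K) * (c₁ : 𝓞 K) * u ^ 2 := by ring
  rw [key]
  exact dvd_sub (dvd_add (dvd_add ((hz a.val).mul_right β) (hdec.mul_left _)) hterm)
    (Dvd.intro_left _ rfl)
end

section
/- Let p be an odd prime, K = ℚ(ζ), π = (1-ζ)O_K, u a primitive root mod p, σ(ζ) = ζ^u, and μ = u^(2m+1) mod p for some 1 ≤ m ≤ (p-3)/2. Suppose C ∈ K with v_π(C) = 0, C·C̄ = 1, C ≡ 1 mod π, σ(C) ≡ C^μ mod π^(p+1), and C is non-primary (i.e., v_π(C-1) ≤ p-2). Then v_π(C - 1) = 2m+1. -/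
open scoped NumberField
open Multiplicative IsDedekindDomain IsDedekindDomain.HeightOneSpectrum

/-! ## WithZero (Multiplicative ℤ) helpers -/

noncomputable def w (k : ℤ) : WithZero (Multiplicative ℤ) :=
  ((ofAdd (-k) : Multiplicative ℤ) : WithZero (Multiplicative ℤ))

lemma w_mul (a b : ℤ) : w a * w b = w (a+b) := by
  simp only [w, ← WithZero.coe_mul, ← ofAdd_add]; ring_nf

lemma w_le {a b : ℤ} : w a ≤ w b ↔ b ≤ a := by
  rw [w, w, WithZero.coe_le_coe, ofAdd_le, neg_le_neg_iff]

lemma w_pow (a : ℤ) (n : ℕ) : w a ^ n = w (n * a) := by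
  induction n with
  | zero => simp [w]
  | succ n ih => rw [pow_succ, ih, w_mul, Nat.cast_succ]; ring_nf

lemma w_zero : w 0 = 1 := by simp [w]

lemma w_ne_zero (a : ℤ) : w a ≠ 0 := WithZero.coe_ne_zero

lemma w_eq_iff {a b : ℤ} : w a = w b ↔ a = b := by
  constructor
  · intro h; exact le_antisymm (w_le.1 h.ge) (w_le.1 h.le)
  · rintro rfl; rfl

lemma w_le_one {a : ℤ} : w a ≤ 1 ↔ 0 ≤ a := by
  rw [← w_zero, w_le]

lemma one_le_w {a : ℤ} : 1 ≤ w a ↔ a ≤ 0 := by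
  rw [← w_zero, w_le]

lemma w_inv (b : ℤ) : (w b)⁻¹ = w (-b) := by
  rw [w, w, ← WithZero.coe_inv, WithZero.coe_inj, ← ofAdd_neg, neg_neg]

lemma w_mul_inv (a b : ℤ) : w a * (w b)⁻¹ = w (a - b) := by
  rw [w_inv, w_mul]; ring_nf

lemma w_div (a b : ℤ) : w a / w b = w (a - b) := by
  rw [div_eq_mul_inv, w_mul_inv]

lemma wz_eq_of_iff {x y : WithZero (Multiplicative ℤ)} (hx : x ≠ 0) (hy : y ≠ 0)
    (hx1 : x ≤ 1) (hy1 : y ≤ 1) (h : ∀ n : ℕ, x ≤ w n ↔ y ≤ w n) : x = y := by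
  obtain ⟨g, rfl⟩ := WithZero.ne_zero_iff_exists.1 hx
  obtain ⟨g', rfl⟩ := WithZero.ne_zero_iff_exists.1 hy
  have hg : toAdd g ≤ 0 := by
    rwa [← WithZero.coe_one, WithZero.coe_le_coe, ← toAdd_le, toAdd_one] at hx1
  have hg' : toAdd g' ≤ 0 := by
    rwa [← WithZero.coe_one, WithZero.coe_le_coe, ← toAdd_le, toAdd_one] at hy1
  have key : ∀ (a : Multiplicative ℤ) (n : ℕ),
      ((a : WithZero (Multiplicative ℤ)) ≤ w n ↔ toAdd a ≤ -(n:ℤ)) := by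
    intro a n
    rw [w, WithZero.coe_le_coe, ← ofAdd_toAdd a, ofAdd_le]; simp
  have h1 : toAdd g' ≤ toAdd g := by
    have := (h (-toAdd g).toNat).1 (by rw [key]; omega)
    rw [key] at this; omega
  have h2 : toAdd g ≤ toAdd g' := by
    have := (h (-toAdd g').toNat).2 (by rw [key]; omega)
    rw [key] at this; omega
  have : toAdd g = toAdd g' := le_antisymm h2 h1
  rw [← ofAdd_toAdd g, ← ofAdd_toAdd g', this]

lemma exists_w {x : WithZero (Multiplicative ℤ)} (hx : x ≠ 0) (hx1 : x ≤ 1) :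
    ∃ k : ℕ, x = w k := by
  obtain ⟨g, rfl⟩ := WithZero.ne_zero_iff_exists.1 hx
  have hg : toAdd g ≤ 0 := by
    rwa [← WithZero.coe_one, WithZero.coe_le_coe, ← toAdd_le, toAdd_one] at hx1
  refine ⟨(-toAdd g).toNat, ?_⟩
  have h : toAdd g = -(((-toAdd g).toNat):ℤ) := by omega
  rw [w, WithZero.coe_inj, ← ofAdd_toAdd g]
  conv_lhs => rw [h]
  simp only [toAdd_ofAdd]

lemma wz_lt_one {x : WithZero (Multiplicative ℤ)} (hx : x ≠ 0) (h : x < 1) : x ≤ w 1 := by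
  obtain ⟨k, rfl⟩ := exists_w hx h.le
  rw [w_le]
  by_contra hk
  have : (k:ℤ) = 0 := by omega
  rw [this, w_zero] at h
  exact lt_irrefl _ h

/-! ## valuation under ring equivalences -/

lemma intVal_equiv {R : Type*} [CommRing R] [IsDedekindDomain R]
    (v : HeightOneSpectrum R) (e : R ≃+* R)
    (he : Ideal.map (e : R →+* R) v.asIdeal = v.asIdeal) (r : R) :
    v.intValuation (e r) = v.intValuation r := by
  rcases eq_or_ne r 0 with rfl | hr
  · simp
  have her : e r ≠ 0 := fun h => hr (by simpa using congrArg e.symm h)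
  have hne1 : v.intValuation (e r) ≠ 0 := by
    rw [intValuation_apply]; exact v.intValuation_ne_zero _ her
  have hne2 : v.intValuation r ≠ 0 := by
    rw [intValuation_apply]; exact v.intValuation_ne_zero _ hr
  have hle1 : v.intValuation (e r) ≤ 1 := by
    rw [intValuation_apply]; exact v.intValuation_le_one _
  have hle2 : v.intValuation r ≤ 1 := by
    rw [intValuation_apply]; exact v.intValuation_le_one _
  refine wz_eq_of_iff hne1 hne2 hle1 hle2 (fun n => ?_)
  rw [show w n = WithZero.exp (-(n:ℤ)) from rfl]
  rw [intValuation_le_pow_iff_dvd,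
    intValuation_le_pow_iff_dvd, Ideal.dvd_iff_le, Ideal.dvd_iff_le,
    Ideal.span_singleton_le_iff_mem, Ideal.span_singleton_le_iff_mem]
  conv_lhs => rw [show v.asIdeal ^ n = (v.asIdeal ^ n).map (e : R →+* R) by
    rw [Ideal.map_pow, he]]
  exact Ideal.apply_mem_of_equiv_iff (f := (e : R ≃+* R))

/-! ## cyclotomic setting -/

section Cyclo

variable {p : ℕ+} (hp : (p : ℕ).Prime)
  {K : Type} [Field K] [NumberField K] [IsCyclotomicExtension {(p : ℕ)} ℚ K]
  {ζ : 𝓞 K} (hζ : IsPrimitiveRoot ζ p)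
  {v : IsDedekindDomain.HeightOneSpectrum (𝓞 K)}
  (hv : v.asIdeal = Ideal.span {1 - ζ})
  {u : ℕ} (hu : orderOf (u : ZMod p) = (p : ℕ) - 1)
  {σ : K ≃ₐ[ℚ] K} (hσ : σ (ζ : K) = (ζ : K) ^ u)

include hp hu in
lemma u_ne : (u : ZMod p) ≠ 0 := by
  haveI : Fact (p:ℕ).Prime := ⟨hp⟩
  intro h
  have h2 := pow_orderOf_eq_one (u : ZMod p)
  rw [hu, h, zero_pow (by have := hp.two_le; omega : (p:ℕ) - 1 ≠ 0)] at h2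
  exact zero_ne_one h2

include hp hu in
lemma u_coprime : Nat.Coprime u p := by
  haveI : Fact (p:ℕ).Prime := ⟨hp⟩
  exact (ZMod.isUnit_iff_coprime u p).1 (isUnit_iff_ne_zero.2 (u_ne hp hu))

include hp hζ hu in
lemma span_u : Ideal.span {1 - ζ ^ u} = Ideal.span {1 - ζ} := by
  have h1 : (1 - ζ) ∣ (1 - ζ ^ u) := by
    have h := sub_dvd_pow_sub_pow ζ 1 u
    simp only [one_pow] at h
    simpa [neg_sub] using neg_dvd.2 (dvd_neg.2 h)
  have h2 : (1 - ζ ^ u) ∣ (1 - ζ) := by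
    obtain ⟨u', -, hu'⟩ := Nat.exists_mul_mod_eq_one_of_coprime (u_coprime hp hu) hp.one_lt
    have hz : (ζ ^ u) ^ u' = ζ := by
      rw [← pow_mul]
      conv_lhs => rw [show u * u' = (p:ℕ) * (u * u' / p) + 1 by
        conv_lhs => rw [← Nat.div_add_mod (u * u') p, hu']]
      rw [pow_add, pow_one, pow_mul, hζ.pow_eq_one, one_pow, one_mul]
    have h := sub_dvd_pow_sub_pow (ζ ^ u) 1 u'
    simp only [one_pow, hz] at h
    simpa [neg_sub] using neg_dvd.2 (dvd_neg.2 h)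
  exact le_antisymm (Ideal.span_singleton_le_span_singleton.2 h1)
    (Ideal.span_singleton_le_span_singleton.2 h2)

/-- restriction of `σ` to the ring of integers -/
noncomputable def tauK (K : Type) [Field K] [NumberField K] (σ : K ≃ₐ[ℚ] K) :
    (𝓞 K) ≃ₐ[ℤ] (𝓞 K) := galRestrict ℤ ℚ K (𝓞 K) σ

lemma tauK_spec (K : Type) [Field K] [NumberField K] (σ : K ≃ₐ[ℚ] K) (x : 𝓞 K) :
    algebraMap (𝓞 K) K (tauK K σ x) = σ (algebraMap (𝓞 K) K x) :=
  algebraMap_galRestrict_apply ℤ σ x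

include hσ in
lemma tauK_zeta : tauK K σ ζ = ζ ^ u := by
  apply NumberField.RingOfIntegers.coe_injective
  rw [tauK_spec]
  show σ (ζ : K) = algebraMap (𝓞 K) K (ζ ^ u)
  rw [hσ, map_pow]

include hp hζ hv hσ hu in
lemma map_tauK : Ideal.map ((tauK K σ : (𝓞 K) ≃+* (𝓞 K)) : (𝓞 K) →+* (𝓞 K)) v.asIdeal
    = v.asIdeal := by
  rw [hv, Ideal.map_span, Set.image_singleton]
  show Ideal.span {tauK K σ (1 - ζ)} = _
  rw [map_sub, map_one, tauK_zeta hσ]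
  exact span_u hp hζ hu

include hp hζ hv hσ hu in
lemma val_sigma_s18 (x : K) : v.valuation K (σ x) = v.valuation K x := by
  obtain ⟨a, b, hb, rfl⟩ := IsFractionRing.div_surjective (A := 𝓞 K) x
  rw [map_div₀, map_div₀, map_div₀]
  have ha : σ (algebraMap (𝓞 K) K a) = algebraMap (𝓞 K) K (tauK K σ a) := (tauK_spec K σ a).symm
  have hb' : σ (algebraMap (𝓞 K) K b) = algebraMap (𝓞 K) K (tauK K σ b) := (tauK_spec K σ b).symm
  have key : ∀ y : 𝓞 K, v.intValuation ((tauK K σ) y) = v.intValuation y := by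
    intro y
    have := intVal_equiv v ((tauK K σ) : (𝓞 K) ≃+* (𝓞 K)) (map_tauK hp hζ hv hu hσ) y
    simpa [AlgEquiv.coe_ringEquiv] using this
  rw [ha, hb', valuation_of_algebraMap, valuation_of_algebraMap, valuation_of_algebraMap,
    valuation_of_algebraMap, key a, key b]

include hv in
lemma dvd_val {x : 𝓞 K} {n : ℕ} (h : (1-ζ)^n ∣ x) :
    v.valuation K (algebraMap (𝓞 K) K x) ≤ w n := by
  rw [valuation_of_algebraMap, 
    show w n = WithZero.exp (-(n:ℤ)) from rfl,
    intValuation_le_pow_iff_dvd, Ideal.dvd_span_singleton, hv, Ideal.span_singleton_pow]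
  exact Ideal.mem_span_singleton.2 h

include hp hζ in
lemma residue (x : 𝓞 K) : ∃ c : ℤ, (1 - ζ) ∣ (x - (c : 𝓞 K)) := by
  haveI : Fact (p:ℕ).Prime := ⟨hp⟩
  have hζK : IsPrimitiveRoot (algebraMap (𝓞 K) K ζ) p :=
    hζ.map_of_injective NumberField.RingOfIntegers.coe_injective
  have hgen : hζK.integralPowerBasis.gen = ζ := by
    rw [hζK.integralPowerBasis_gen]
    rfl
  have hadj : x ∈ Algebra.adjoin ℤ ({ζ} : Set (𝓞 K)) := by
    rw [← hgen]
    rw [hζK.integralPowerBasis.adjoin_gen_eq_top]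
    trivial
  rw [Algebra.adjoin_singleton_eq_range_aeval] at hadj
  obtain ⟨q, hq⟩ := hadj
  refine ⟨q.eval 1, ?_⟩
  have h1 : (ζ - 1) ∣ ((q.map (algebraMap ℤ (𝓞 K))).eval ζ - (q.map (algebraMap ℤ (𝓞 K))).eval 1) :=
    Polynomial.sub_dvd_eval_sub ζ 1 _
  have h2 : (q.map (algebraMap ℤ (𝓞 K))).eval ζ = x := by
    rw [Polynomial.eval_map, ← Polynomial.aeval_def]
    exact hq
  have h3 : (q.map (algebraMap ℤ (𝓞 K))).eval 1 = ((q.eval 1 : ℤ) : 𝓞 K) := by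
    rw [Polynomial.eval_one_map]
    simp
  rw [h2, h3] at h1
  exact dvd_sub_comm.mp (by simpa [neg_sub] using neg_dvd.2 (dvd_neg.2 h1))

lemma natcast_le_one (c : ℕ) : v.valuation K ((c:K)) ≤ 1 := by
  have : ((c:K)) = algebraMap (𝓞 K) K ((c : 𝓞 K)) := by push_cast; rfl
  rw [this, valuation_of_algebraMap, intValuation_apply]
  exact v.intValuation_le_one _

lemma intcast_le_one (c : ℤ) : v.valuation K ((c:K)) ≤ 1 := by
  have : ((c:K)) = algebraMap (𝓞 K) K ((c : 𝓞 K)) := by push_cast; rfl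
  rw [this, valuation_of_algebraMap, intValuation_apply]
  exact v.intValuation_le_one _

include hp hζ hv in
lemma p_val : v.valuation K (((p:ℕ):K)) ≤ w 1 := by
  haveI : Fact (p:ℕ).Prime := ⟨hp⟩
  have hζK : IsPrimitiveRoot (algebraMap (𝓞 K) K ζ) p :=
    hζ.map_of_injective NumberField.RingOfIntegers.coe_injective
  have hd0 := hζK.toInteger_sub_one_dvd_prime'
  have hd : (1 - ζ) ∣ (((p:ℕ)) : 𝓞 K) := by
    have h1 : hζK.toInteger = ζ := rfl
    rw [h1] at hd0
    have := neg_dvd.2 hd0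
    rw [neg_sub] at this
    exact_mod_cast this
  have hcast : (((p:ℕ)):K) = algebraMap (𝓞 K) K (((p:ℕ)) : 𝓞 K) := by push_cast; rfl
  rw [hcast]
  exact dvd_val hv (by rwa [pow_one])

include hp hζ hv in
lemma intcast_val {k : ℤ} (hk : (k : ZMod p) ≠ 0) : v.valuation K ((k:K)) = 1 := by
  haveI : Fact (p:ℕ).Prime := ⟨hp⟩
  have hk0 : k ≠ 0 := by rintro rfl; simp at hk
  have hkK : (k:K) ≠ 0 := Int.cast_ne_zero.2 hk0
  by_contra hne
  have hlt : v.valuation K ((k:K)) < 1 := lt_of_le_of_ne (intcast_le_one k) hne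
  have hle : v.valuation K ((k:K)) ≤ w 1 :=
    wz_lt_one ((v.valuation K).ne_zero_iff.2 hkK) hlt
  set s : ℕ := ((k : ZMod p)⁻¹).val with hs_def
  have hs : ((k * s - 1 : ℤ) : ZMod p) = 0 := by
    push_cast
    rw [ZMod.natCast_val, ZMod.cast_id, mul_inv_cancel₀ hk, sub_self]
  obtain ⟨r, hr⟩ := (ZMod.intCast_zmod_eq_zero_iff_dvd _ _).1 hs
  have h1 : v.valuation K ((k:K) * (s:K)) ≤ w 1 := by
    rw [Valuation.map_mul]
    calc v.valuation K ((k:K)) * v.valuation K ((s:K)) ≤ w 1 * 1 :=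
          mul_le_mul' hle (natcast_le_one s)
      _ = w 1 := mul_one _
  have h2 : ((k:K) * (s:K)) = 1 + ((p:ℕ):K) * (r:K) := by
    have hint : (k * s : ℤ) = 1 + (p:ℕ) * r := by omega
    calc ((k:K) * (s:K)) = ((k * s : ℤ) : K) := by push_cast; ring
      _ = ((1 + (p:ℕ) * r : ℤ) : K) := by rw [hint]
      _ = 1 + ((p:ℕ):K) * (r:K) := by push_cast; ring
  have hpr : v.valuation K (((p:ℕ):K) * (r:K)) < 1 := by
    calc v.valuation K (((p:ℕ):K) * (r:K)) = v.valuation K (((p:ℕ):K)) * v.valuation K ((r:K)) :=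
          Valuation.map_mul _ _ _
      _ ≤ w 1 * 1 := mul_le_mul' (p_val hp hζ hv) (intcast_le_one r)
      _ = w 1 := mul_one _
      _ < 1 := by rw [← w_zero]; exact lt_of_le_of_ne (w_le.2 (by omega)) (by
          rw [Ne, w_eq_iff]; omega)
  have h3 : v.valuation K (1 + ((p:ℕ):K) * (r:K)) = 1 := by
    rw [Valuation.map_add_eq_of_lt_left]
    · exact Valuation.map_one _
    · rwa [Valuation.map_one]
  rw [h2, h3] at h1
  rw [one_le_w] at h1  -- wrong direction name use; fix below
  omega

include hp hζ hv in
lemma approx (a : K) (ha : v.valuation K a ≤ 1) :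
    ∃ c : ℤ, v.valuation K (a - (c:K)) ≤ w 1 := by
  rcases eq_or_ne a 0 with rfl | ha0
  · refine ⟨0, ?_⟩
    simp only [Int.cast_zero, sub_zero, Valuation.map_zero]
    exact zero_le'
  obtain ⟨x, y, hy, rfl⟩ := IsFractionRing.div_surjective (A := 𝓞 K) a
  have hyne : y ≠ 0 := nonZeroDivisors.ne_zero hy
  have hyK : algebraMap (𝓞 K) K y ≠ 0 := by
    simpa using (map_ne_zero_iff _ NumberField.RingOfIntegers.coe_injective).2 hyne
  have hyv0 : v.valuation K (algebraMap (𝓞 K) K y) ≠ 0 := (v.valuation K).ne_zero_iff.2 hyK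
  have hyv1 : v.valuation K (algebraMap (𝓞 K) K y) ≤ 1 := by
    rw [valuation_of_algebraMap, intValuation_apply]; exact v.intValuation_le_one _
  obtain ⟨k, hk⟩ := exists_w hyv0 hyv1
  have hxle : v.valuation K (algebraMap (𝓞 K) K x) ≤ w k := by
    rw [map_div₀] at ha
    rw [← hk]
    calc v.valuation K (algebraMap (𝓞 K) K x)
        = v.valuation K (algebraMap (𝓞 K) K x) / v.valuation K (algebraMap (𝓞 K) K y)
          * v.valuation K (algebraMap (𝓞 K) K y) := by
          rw [div_mul_cancel₀ _ hyv0]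
      _ ≤ 1 * v.valuation K (algebraMap (𝓞 K) K y) := mul_le_mul' ha le_rfl
      _ = v.valuation K (algebraMap (𝓞 K) K y) := one_mul _
  have hxmem : x ∈ v.asIdeal ^ k := by
    rw [valuation_of_algebraMap, 
      show w k = WithZero.exp (-(k:ℤ)) from rfl,
      intValuation_le_pow_iff_dvd, Ideal.dvd_span_singleton] at hxle
    exact hxle
  have hyI : v.asIdeal ^ k ∣ Ideal.span {y} := by
    have : v.valuation K (algebraMap (𝓞 K) K y) ≤ w k := hk.le
    rwa [valuation_of_algebraMap, 
      show w k = WithZero.exp (-(k:ℤ)) from rfl,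
      intValuation_le_pow_iff_dvd] at this
  obtain ⟨J, hJ⟩ := hyI
  have hJne : ¬ J ≤ v.asIdeal := by
    intro hle
    have hdvd : v.asIdeal ^ (k+1) ∣ Ideal.span {y} := by
      rw [hJ, pow_succ]
      exact mul_dvd_mul dvd_rfl (Ideal.dvd_iff_le.2 hle)
    have : v.valuation K (algebraMap (𝓞 K) K y) ≤ w (k+1) := by
      rw [valuation_of_algebraMap, 
        show w (k+1) = WithZero.exp (-((k+1:ℕ):ℤ))
          by rw [w]; push_cast; ring_nf; rfl,
        intValuation_le_pow_iff_dvd]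
      exact hdvd
    rw [hk, w_le] at this
    omega
  have hmax : v.asIdeal.IsMaximal := Ideal.IsPrime.isMaximal v.isPrime v.ne_bot
  have hsup : v.asIdeal ⊔ J = ⊤ := by
    rcases lt_or_eq_of_le (le_sup_left : v.asIdeal ≤ v.asIdeal ⊔ J) with hlt | heq
    · exact hmax.out.2 _ hlt
    · exact absurd (heq ▸ le_sup_right : J ≤ v.asIdeal) hJne
  have hx2 : x ∈ v.asIdeal ^ (k+1) ⊔ Ideal.span {y} := by
    have hco : v.asIdeal ^ (k+1) ⊔ Ideal.span {y} = v.asIdeal ^ k := by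
      rw [hJ, pow_succ, ← Ideal.mul_sup, hsup, Ideal.mul_top]
    rw [hco]; exact hxmem
  obtain ⟨s, hs, tt, htt, hst⟩ := Submodule.mem_sup.1 hx2
  obtain ⟨d, hd⟩ := Ideal.mem_span_singleton'.1 htt
  have hxsd : x = s + d * y := by rw [hd, hst]
  have keyid : algebraMap (𝓞 K) K x / algebraMap (𝓞 K) K y - algebraMap (𝓞 K) K d
      = algebraMap (𝓞 K) K s / algebraMap (𝓞 K) K y := by
    field_simp
    rw [← map_mul, ← map_sub]
    congr 1
    rw [hxsd]; ring
  have hsval : v.valuation K (algebraMap (𝓞 K) K s) ≤ w (k+1) := by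
    rw [valuation_of_algebraMap, 
      show w (k+1) = WithZero.exp (-((k+1:ℕ):ℤ))
        by rw [w]; push_cast; ring_nf; rfl,
      intValuation_le_pow_iff_dvd, Ideal.dvd_span_singleton]
    exact hs
  have hdval : v.valuation K (algebraMap (𝓞 K) K x / algebraMap (𝓞 K) K y
      - algebraMap (𝓞 K) K d) ≤ w 1 := by
    rw [keyid, map_div₀, hk]
    calc v.valuation K (algebraMap (𝓞 K) K s) / w k
        = v.valuation K (algebraMap (𝓞 K) K s) * (w k)⁻¹ := div_eq_mul_inv _ _
      _ ≤ w (k+1) * (w k)⁻¹ := mul_le_mul_left hsval _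
      _ = w 1 := by rw [w_mul_inv]; congr 1; push_cast; ring
  obtain ⟨c, hc⟩ := residue hp hζ d
  refine ⟨c, ?_⟩
  have hsplit : algebraMap (𝓞 K) K x / algebraMap (𝓞 K) K y - (c:K)
      = (algebraMap (𝓞 K) K x / algebraMap (𝓞 K) K y - algebraMap (𝓞 K) K d)
        + (algebraMap (𝓞 K) K d - (c:K)) := by ring
  rw [hsplit]
  refine le_trans (Valuation.map_add _ _ _) (max_le hdval ?_)
  have hcast : algebraMap (𝓞 K) K (d - (c:𝓞 K)) = algebraMap (𝓞 K) K d - (c:K) := by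
    rw [map_sub, map_intCast]
  rw [← hcast]
  exact dvd_val hv (by rwa [pow_one])

include hp hζ hv hu hσ in
lemma frob (a : K) (ha : v.valuation K a ≤ 1) : v.valuation K (σ a - a) ≤ w 1 := by
  obtain ⟨c, hc⟩ := approx hp hζ hv a ha
  have hσc : σ ((c:K)) = (c:K) := map_intCast σ c
  have hid : σ a - a = σ (a - (c:K)) - (a - (c:K)) := by
    rw [map_sub, hσc]; ring
  rw [hid]
  refine le_trans (Valuation.map_sub _ _ _) (max_le ?_ hc)
  rw [val_sigma_s18 hp hζ hv hu hσ]
  exact hc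

include hp hζ hv in
lemma val_lambda : v.valuation K (1 - (algebraMap (𝓞 K) K ζ)) = w 1 := by
  have h1 : (1 : K) - algebraMap (𝓞 K) K ζ = algebraMap (𝓞 K) K (1 - ζ) := by
    rw [map_sub, map_one]
  rw [h1, valuation_of_algebraMap]
  have hζ1 : (1 : 𝓞 K) - ζ ≠ 0 := by
    rw [sub_ne_zero]
    intro h
    exact hζ.ne_one hp.one_lt h.symm
  exact intValuation_singleton v hζ1 hv

include hp hζ hv hu hσ in
lemma key_A (δ : K) (n : ℕ) (hn1 : 1 ≤ n) (hδ : v.valuation K δ = w n) :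
    v.valuation K (σ δ - ((u:K))^n * δ) ≤ w (n+1) := by
  haveI : Fact (p:ℕ).Prime := ⟨hp⟩
  set lam : K := 1 - algebraMap (𝓞 K) K ζ with hlam_def
  have hlamv : v.valuation K lam = w 1 := val_lambda hp hζ hv
  have hlam0 : lam ≠ 0 := by
    intro h; rw [h, Valuation.map_zero] at hlamv; exact w_ne_zero 1 hlamv.symm
  set a : K := δ / lam ^ n with ha_def
  have hδa : δ = a * lam ^ n := (div_mul_cancel₀ δ (pow_ne_zero n hlam0)).symm
  have hav : v.valuation K a = 1 := by
    rw [ha_def, map_div₀, hδ, map_pow, hlamv, w_pow, mul_one, div_self (w_ne_zero _)]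
  have hσlam : σ lam = 1 - (algebraMap (𝓞 K) K ζ)^u := by
    rw [hlam_def, map_sub, map_one,
      show σ (algebraMap (𝓞 K) K ζ) = (algebraMap (𝓞 K) K ζ)^u from hσ]
  have E1 : v.valuation K (σ lam - (u:K) * lam) ≤ w 2 := by
    have g1 : (1:𝓞 K) - ζ^u = (1-ζ) * (∑ i ∈ Finset.range u, ζ^i) := by
      have h := geom_sum_mul ζ u
      linear_combination h
    have hT : (∑ i ∈ Finset.range u, ((ζ:𝓞 K)^i - 1)) = (∑ i ∈ Finset.range u, ζ^i) - u := by
      rw [Finset.sum_sub_distrib, Finset.sum_const, Finset.card_range]; simp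
    have g2 : (1:𝓞 K) - ζ^u - (u:𝓞 K) * (1 - ζ)
        = (1-ζ) * (∑ i ∈ Finset.range u, (ζ^i - 1)) := by
      rw [hT]; linear_combination g1
    have g3 : (1 - ζ) ∣ (∑ i ∈ Finset.range u, ((ζ:𝓞 K)^i - 1)) := by
      refine Finset.dvd_sum (fun i _ => ?_)
      have h := sub_dvd_pow_sub_pow ζ 1 i
      simp only [one_pow] at h
      simpa [neg_sub] using neg_dvd.2 h
    have hdvd : (1 - ζ)^2 ∣ ((1:𝓞 K) - ζ^u - (u:𝓞 K) * (1 - ζ)) := by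
      rw [g2, sq]
      exact mul_dvd_mul_left _ g3
    have hrep : σ lam - (u:K) * lam
        = algebraMap (𝓞 K) K ((1:𝓞 K) - ζ^u - (u:𝓞 K) * (1 - ζ)) := by
      rw [hσlam, hlam_def, map_sub, map_sub, map_mul, map_sub, map_one, map_pow, map_natCast]
    rw [hrep]
    exact dvd_val hv hdvd
  have E2 : v.valuation K (σ lam) = w 1 := by
    rw [val_sigma_s18 hp hζ hv hu hσ]; exact hlamv
  have vu : v.valuation K ((u:K)) = 1 := by
    have hcast : ((u:ℕ):K) = (((u:ℤ)):K) := by push_cast; rfl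
    rw [hcast]
    refine intcast_val hp hζ hv ?_
    have := u_ne hp hu
    exact_mod_cast this
  have E3 : v.valuation K ((σ lam)^n - ((u:K) * lam)^n) ≤ w (n+1) := by
    have hgeom := geom_sum₂_mul (σ lam) ((u:K)*lam) n
    rw [← hgeom, Valuation.map_mul]
    have hsum : v.valuation K (∑ i ∈ Finset.range n, (σ lam)^i * ((u:K)*lam)^(n-1-i))
        ≤ w ((n:ℤ)-1) := by
      apply Valuation.map_sum_le
      intro i hi
      rw [Finset.mem_range] at hi
      rw [Valuation.map_mul, map_pow, map_pow, E2, Valuation.map_mul, vu, hlamv, one_mul,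
        w_pow, w_pow, mul_one, mul_one, w_mul, w_le]
      push_cast
      omega
    calc v.valuation K (∑ i ∈ Finset.range n, (σ lam)^i * ((u:K)*lam)^(n-1-i))
          * v.valuation K (σ lam - (u:K)*lam)
        ≤ w ((n:ℤ)-1) * w 2 := mul_le_mul' hsum E1
      _ = w (n+1) := by rw [w_mul, w_eq_iff]; ring
  have E4 : v.valuation K (σ a - a) ≤ w 1 := frob hp hζ hv hu hσ a hav.le
  have hidA : σ δ - ((u:K))^n * δ
      = σ a * ((σ lam)^n - ((u:K)*lam)^n) + ((u:K)*lam)^n * (σ a - a) := by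
    conv_lhs => rw [hδa]
    rw [map_mul, map_pow]
    simp only [mul_pow]
    ring
  rw [hidA]
  refine le_trans (Valuation.map_add _ _ _) (max_le ?_ ?_)
  · rw [Valuation.map_mul, val_sigma_s18 hp hζ hv hu hσ, hav, one_mul]; exact E3
  · rw [Valuation.map_mul, map_pow, Valuation.map_mul, vu, hlamv, one_mul, w_pow, mul_one]
    calc w ((n:ℕ):ℤ) * v.valuation K (σ a - a) ≤ w ((n:ℕ):ℤ) * w 1 := mul_le_mul' le_rfl E4
      _ = w ((n:ℕ)+1) := by rw [w_mul]

lemma key_B (C : K) (μ : ℕ) (n : ℕ) (hn1 : 1 ≤ n) (hδ : v.valuation K (C - 1) = w n) :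
    v.valuation K (C^μ - 1 - (μ:K) * (C - 1)) ≤ w (n+1) := by
  set δ : K := C - 1 with hδdef
  have hC : C = 1 + δ := by rw [hδdef]; ring
  rcases μ with _ | _ | μ
  · have : C^0 - 1 - ((0:ℕ):K) * δ = 0 := by push_cast; ring
    rw [this, Valuation.map_zero]
    exact zero_le'
  · have : C^1 - 1 - ((1:ℕ):K) * δ = 0 := by push_cast [hδdef]; ring
    rw [this, Valuation.map_zero]
    exact zero_le'
  · have hpow := add_pow δ (1:K) (μ+2)
    simp only [one_pow, mul_one] at hpow
    have hC2 : C ^ (μ+2) = ∑ k ∈ Finset.range (μ+3), δ^k * (((μ+2).choose k : ℕ) : K) := by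
      rw [hC, add_comm 1 δ]
      convert hpow using 2
    have hsplit : C ^ (μ+2) - 1 - (((μ+2:ℕ)):K) * δ
        = ∑ k ∈ Finset.Ico 2 (μ+3), δ^k * (((μ+2).choose k : ℕ) : K) := by
      rw [hC2, Finset.range_eq_Ico, Finset.sum_eq_sum_Ico_succ_bot (by omega : 0 < μ+3),
        Finset.sum_eq_sum_Ico_succ_bot (by omega : 1 < μ+3)]
      simp only [pow_zero, one_mul, Nat.choose_zero_right, Nat.cast_one, pow_one,
        Nat.choose_one_right]
      push_cast
      ring
    show v.valuation K (C ^ (μ+2) - 1 - (((μ+2:ℕ)):K) * δ) ≤ w (n+1)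
    rw [hsplit]
    apply Valuation.map_sum_le
    intro k hk
    rw [Finset.mem_Ico] at hk
    rw [Valuation.map_mul, map_pow, hδ, w_pow]
    have h2 : (2:ℤ) ≤ (k:ℤ) := by exact_mod_cast hk.1
    have h1 : (1:ℤ) ≤ (n:ℤ) := by exact_mod_cast hn1
    calc w ((k:ℤ) * (n:ℤ)) * v.valuation K ((((μ+2).choose k : ℕ) : K))
        ≤ w ((k:ℤ) * (n:ℤ)) * 1 := mul_le_mul' le_rfl (natcast_le_one _)
      _ = w ((k:ℤ) * (n:ℤ)) := mul_one _
      _ ≤ w ((n:ℕ)+1) := by rw [w_le]; push_cast; nlinarith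

end Cyclo

/-- Let `μ ≡ u^(2m+1) mod p` with `1 ≤ m ≤ (p-3)/2`.  Suppose `C ∈ K` satisfies
`v_π(C) = 0`, `C·C̄ = 1`, `C ≡ 1 mod π`, `σ(C) ≡ C^μ mod π^(p+1)`, and `C` is
non-primary, i.e. `v_π(C-1) ≤ p-2`.  Then `v_π(C-1) = 2m+1`. -/
theorem stmt_18 (p : ℕ+) (hp : (p : ℕ).Prime) (hodd : Odd (p : ℕ))
    (K : Type) [Field K] [NumberField K] [IsCyclotomicExtension {(p : ℕ)} ℚ K]
    (ζ : 𝓞 K) (hζ : IsPrimitiveRoot ζ p)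
    (v : IsDedekindDomain.HeightOneSpectrum (𝓞 K))
    (hv : v.asIdeal = Ideal.span {1 - ζ})
    (u : ℕ) (hu : orderOf (u : ZMod p) = (p : ℕ) - 1)
    (σ : K ≃ₐ[ℚ] K) (hσ : σ (ζ : K) = (ζ : K) ^ u)
    (conj : K ≃ₐ[ℚ] K) (hconj : conj (ζ : K) = (ζ : K)⁻¹)
    (m : ℕ) (hm1 : 1 ≤ m) (hm2 : m ≤ ((p : ℕ) - 3) / 2)
    (μ : ℕ) (hμ : (μ : ZMod p) = (u : ZMod p) ^ (2 * m + 1))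
    (C : K) (hC0 : v.valuation K C = 1) (hCconj : C * conj C = 1)
    (hC1 : v.valuation K (C - 1) ≤
      ((Multiplicative.ofAdd (-1 : ℤ) : Multiplicative ℤ) : WithZero (Multiplicative ℤ)))
    (hσC : v.valuation K (σ C - C ^ μ) ≤
      ((Multiplicative.ofAdd (-(((p : ℕ) : ℤ) + 1)) : Multiplicative ℤ) :
        WithZero (Multiplicative ℤ)))
    (hnonprim : ((Multiplicative.ofAdd (-(((p : ℕ) : ℤ) - 2)) : Multiplicative ℤ) :
        WithZero (Multiplicative ℤ)) ≤ v.valuation K (C - 1)) :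
    v.valuation K (C - 1) =
      ((Multiplicative.ofAdd (-(2 * (m : ℤ) + 1)) : Multiplicative ℤ) :
        WithZero (Multiplicative ℤ)) := by
  haveI : Fact (p:ℕ).Prime := ⟨hp⟩
  have hp2 : 2 ≤ (p:ℕ) := hp.two_le
  have hpodd : (p:ℕ) % 2 = 1 := Nat.odd_iff.1 hodd
  have hCm1 : v.valuation K (C - 1) ≠ 0 := by
    intro h
    rw [h, le_zero_iff] at hnonprim
    exact WithZero.coe_ne_zero hnonprim
  have hle1 : v.valuation K (C - 1) ≤ 1 := le_trans hC1 (by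
    rw [show ((Multiplicative.ofAdd (-1:ℤ) : Multiplicative ℤ) :
      WithZero (Multiplicative ℤ)) = w 1 from rfl, w_le_one]
    omega)
  obtain ⟨n, hn⟩ := exists_w hCm1 hle1
  have hn1 : 1 ≤ n := by
    have h := hC1
    rw [hn, show ((Multiplicative.ofAdd (-1:ℤ) : Multiplicative ℤ) :
      WithZero (Multiplicative ℤ)) = w 1 from rfl, w_le] at h
    exact_mod_cast h
  have hn2 : (n:ℤ) ≤ ((p:ℕ):ℤ) - 2 := by
    have h := hnonprim
    rw [hn, show ((Multiplicative.ofAdd (-(((p:ℕ):ℤ) - 2)) : Multiplicative ℤ) :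
      WithZero (Multiplicative ℤ)) = w (((p:ℕ):ℤ) - 2) from rfl, w_le] at h
    exact h
  set t : ℤ := (u:ℤ)^n - (μ:ℤ) with ht_def
  have hident : (t : K) * (C - 1)
      = (σ C - C ^ μ) - (σ (C-1) - ((u:K))^n * (C-1)) + (C^μ - 1 - (μ:K) * (C-1)) := by
    rw [map_sub σ, map_one, ht_def]
    push_cast
    ring
  have hA : v.valuation K (σ (C-1) - ((u:K))^n * (C-1)) ≤ w ((n:ℤ)+1) :=
    key_A hp hζ hv hu hσ (C-1) n hn1 hn
  have hB : v.valuation K (C^μ - 1 - (μ:K) * (C-1)) ≤ w ((n:ℤ)+1) :=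
    key_B (v := v) C μ n hn1 hn
  have hσC' : v.valuation K (σ C - C ^ μ) ≤ w ((n:ℤ)+1) := by
    refine le_trans hσC ?_
    rw [show ((Multiplicative.ofAdd (-(((p:ℕ):ℤ)+1)) : Multiplicative ℤ) :
      WithZero (Multiplicative ℤ)) = w (((p:ℕ):ℤ)+1) from rfl, w_le]
    omega
  have hsum : v.valuation K ((t:K) * (C-1)) ≤ w ((n:ℤ)+1) := by
    rw [hident]
    exact le_trans (Valuation.map_add _ _ _)
      (max_le (le_trans (Valuation.map_sub _ _ _) (max_le hσC' hA)) hB)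
  have ht : v.valuation K ((t:K)) ≤ w 1 := by
    rcases eq_or_ne (v.valuation K ((t:K))) 0 with h0 | h0
    · rw [h0]; exact zero_le'
    · have hmul : v.valuation K ((t:K)) * w n ≤ w ((n:ℤ)+1) := by
        rw [Valuation.map_mul, hn] at hsum
        exact hsum
      have h2 := mul_le_mul_left hmul ((w n)⁻¹)
      rw [mul_assoc, mul_inv_cancel₀ (w_ne_zero _), mul_one, w_mul_inv] at h2
      calc v.valuation K ((t:K)) ≤ w ((n:ℤ)+1 - (n:ℤ)) := h2
        _ = w 1 := by norm_num
  have htz : (t : ZMod p) = 0 := by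
    by_contra h
    have h1 := intcast_val hp hζ hv h
    rw [h1, one_le_w] at ht
    omega
  have hZ : (u:ZMod p)^n = (u:ZMod p)^(2*m+1) := by
    have hcast : (((u:ℤ)^n - (μ:ℤ) : ℤ) : ZMod p) = 0 := htz
    push_cast at hcast
    rw [sub_eq_zero] at hcast
    rw [hcast, hμ]
  have hne0 : (u : ZMod p) ≠ 0 := u_ne hp hu
  have hmod : n ≡ 2*m+1 [MOD (p:ℕ)-1] := by
    have hun : IsUnit ((u:ZMod p)) := isUnit_iff_ne_zero.2 hne0
    have hval : (hun.unit : ZMod p) = (u:ZMod p) := hun.unit_spec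
    have hx : hun.unit ^ n = hun.unit ^ (2*m+1) :=
      Units.ext (by simp only [Units.val_pow_eq_pow_val, hval, hZ])
    rw [pow_eq_pow_iff_modEq] at hx
    have horder : orderOf hun.unit = (p:ℕ)-1 := by
      rw [← orderOf_units, hval]
      exact hu
    rwa [horder] at hx
  have h2m : 2*m ≤ (p:ℕ) - 3 := by omega
  have hnn : n = 2*m+1 := by
    have h' := hmod
    unfold Nat.ModEq at h'
    have hnlt : n < (p:ℕ)-1 := by omega
    have hmlt : 2*m+1 < (p:ℕ)-1 := by omega
    rw [Nat.mod_eq_of_lt hnlt, Nat.mod_eq_of_lt hmlt] at h'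
    exact h'
  rw [hn, show ((Multiplicative.ofAdd (-(2*(m:ℤ)+1)) : Multiplicative ℤ) :
    WithZero (Multiplicative ℤ)) = w (2*(m:ℤ)+1) from rfl, w_eq_iff]
  push_cast [hnn]
  ring
end
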